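/- arXiv:1811.06389 — 5 statements merged into one kernel-verified Lean document; each statement's English description precedes it below -/
import Mathlib

section
/- Let H be a bipartite graph on vertex classes X and Y, each of size n, where n is even, and let M = {M_1, …, M_m} be a partition of the edge set of H into perfect matchings. Then the graph G[M] on vertex set {1, …, m}, in which i and j are adjacent if and only if M_i ∪ M_j is a Hamilton cycle of H, is bipartite (equivalently, contains no odd cycle). -/
open SimpleGraph

/-- The hypercube graph `Q_d`: vertices are subsets of `{1,…,d}`, two subsets adjacent
iff they differ in exactly one element. -/
def cube (d : ℕ) : SimpleGraph (Finset (Fin d)) where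
  Adj u v := (symmDiff u v).card = 1
  symm := ⟨fun u v h => by rwa [symmDiff_comm]⟩
  loopless := ⟨fun u h => by simp [symmDiff_self] at h⟩

/-- `M` is a perfect matching of `G` (as a set of edges): `M` consists of edges of `G`
and every vertex lies in a unique edge of `M`. -/
def IsPM {V : Type*} (G : SimpleGraph V) (M : Set (Sym2 V)) : Prop :=
  M ⊆ G.edgeSet ∧ ∀ v : V, ∃! e, e ∈ M ∧ v ∈ e

/-- `M` is a 1-factorization of `G`: a partition of the edge set of `G` into
perfect matchings. -/
def IsFactorization {V : Type*} {ι : Type*} (G : SimpleGraph V) (M : ι → Set (Sym2 V)) : Prop :=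
  (∀ i, IsPM G (M i)) ∧ (∀ i j, i ≠ j → Disjoint (M i) (M j)) ∧ (⋃ i, M i) = G.edgeSet

/-- The edge set `E` forms a Hamilton cycle: there is a Hamiltonian cycle in the graph
with edge set `E` which uses every edge of `E`. -/
def IsHamCycleSet {V : Type*} [DecidableEq V] (E : Set (Sym2 V)) : Prop :=
  ∃ (v : V) (w : (SimpleGraph.fromEdgeSet E).Walk v v),
    w.IsHamiltonianCycle ∧ ∀ e ∈ E, e ∈ w.edges

open Equiv Equiv.Perm in
lemma mySameCycle_conj {V : Type*} {p c : Equiv.Perm V} (hc : c * p * c = p⁻¹)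
    (hc2 : c * c = 1) {x y : V} (h : p.SameCycle x y) : p.SameCycle (c x) (c y) := by
  obtain ⟨k, hk⟩ := h
  have hcinv : c⁻¹ = c := inv_eq_of_mul_eq_one_left hc2
  have hconj : p⁻¹ = c * p * c⁻¹ := by rw [hcinv]; exact hc.symm
  have h1 : p ^ (-k) = c * p ^ k * c⁻¹ := by
    rw [zpow_neg, ← inv_zpow, hconj, ← MulAut.conj_apply, ← map_zpow, MulAut.conj_apply]
  refine ⟨-k, ?_⟩
  rw [h1, hcinv]
  have hcc : ∀ v, c (c v) = v := fun v => by
    have := Equiv.ext_iff.mp hc2 v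
    simpa using this
  simp only [Equiv.Perm.mul_apply, hcc, hk]

/-- If `H` is a bipartite graph on vertex classes `X`, `Y`, each of even size `n`,
and `M₁, …, Mₘ` is a 1-factorization of `H`, then the graph `G[M]` on `{1, …, m}`,
with `i ~ j` iff `M_i ∪ M_j` is a Hamilton cycle, is bipartite (2-colorable). -/
theorem statement0 {V : Type*} [Fintype V] [DecidableEq V] (G : SimpleGraph V)
    (X Y : Finset V) (n : ℕ) (hn : Even n) (hX : X.card = n) (hY : Y.card = n)
    (hpart : ∀ v : V, (v ∈ X ∧ v ∉ Y) ∨ (v ∈ Y ∧ v ∉ X))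
    (hbip : ∀ u v : V, G.Adj u v → (u ∈ X ∧ v ∈ Y) ∨ (u ∈ Y ∧ v ∈ X))
    (m : ℕ) (M : Fin m → Set (Sym2 V)) (hM : IsFactorization G M) :
    (SimpleGraph.fromRel (fun i j : Fin m => IsHamCycleSet (M i ∪ M j))).Colorable 2 := by
  classical
  obtain ⟨hPM, hdisj, -⟩ := hM
  -- the matching functions
  have hfex : ∀ (i : Fin m) (v : V), ∃ u, s(v, u) ∈ M i := by
    intro i v
    obtain ⟨e, ⟨he, hve⟩, -⟩ := (hPM i).2 v
    exact ⟨Sym2.Mem.other hve, by rwa [Sym2.other_spec]⟩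
  choose f hfmem using hfex
  -- uniqueness of the matching edge
  have hfu : ∀ (i : Fin m) (v : V) (e : Sym2 V), e ∈ M i → v ∈ e → e = s(v, f i v) := by
    intro i v e he hve
    obtain ⟨e', -, hu⟩ := (hPM i).2 v
    rw [hu e ⟨he, hve⟩, hu s(v, f i v) ⟨hfmem i v, Sym2.mem_mk_left _ _⟩]
  have hadjG : ∀ (i : Fin m) (v : V), G.Adj v (f i v) := fun i v =>
    (SimpleGraph.mem_edgeSet G).mp ((hPM i).1 (hfmem i v))
  have hne : ∀ (i : Fin m) (v : V), v ≠ f i v := fun i v => (hadjG i v).ne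
  have hinv : ∀ (i : Fin m) (v : V), f i (f i v) = v := by
    intro i v
    have h1 : s(v, f i v) = s(f i v, f i (f i v)) :=
      hfu i (f i v) s(v, f i v) (hfmem i v) (Sym2.mem_mk_right _ _)
    rcases Sym2.eq_iff.mp h1 with ⟨h2, -⟩ | ⟨h2, -⟩
    · exact absurd h2 (hne i v)
    · exact h2.symm
  have hXY : ∀ (i : Fin m) (v : V), v ∈ X → f i v ∈ Y := by
    intro i v hv
    rcases hbip v (f i v) (hadjG i v) with ⟨-, h⟩ | ⟨h, -⟩
    · exact h
    · rcases hpart v with ⟨-, hv'⟩ | ⟨-, hv'⟩ <;> [exact absurd h hv'; exact absurd hv hv']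
  have hYX : ∀ (i : Fin m) (v : V), v ∈ Y → f i v ∈ X := by
    intro i v hv
    rcases hbip v (f i v) (hadjG i v) with ⟨h, -⟩ | ⟨-, h⟩
    · rcases hpart v with ⟨-, hv'⟩ | ⟨-, hv'⟩ <;> [exact absurd hv hv'; exact absurd h hv']
    · exact h
  -- the matching equivalences X ≃ Y
  let ee : Fin m → ({v : V // v ∈ X} ≃ {v : V // v ∈ Y}) := fun k =>
    ⟨fun x => ⟨f k x, hXY k x x.2⟩, fun y => ⟨f k y, hYX k y y.2⟩,
      fun x => Subtype.ext (hinv k x), fun y => Subtype.ext (hinv k y)⟩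
  -- a fixed bijection X ≃ Y
  have hcard : Fintype.card {v : V // v ∈ X} = Fintype.card {v : V // v ∈ Y} := by
    rw [Fintype.card_coe, Fintype.card_coe, hX, hY]
  let g : {v : V // v ∈ X} ≃ {v : V // v ∈ Y} := Fintype.equivOfCardEq hcard
  let σ : Fin m → Equiv.Perm {v : V // v ∈ X} := fun k => (ee k).trans g.symm
  -- the key claim
  have key : ∀ i j : Fin m, i ≠ j → IsHamCycleSet (M i ∪ M j) →
      Equiv.Perm.sign (σ i) ≠ Equiv.Perm.sign (σ j) := by
    intro i j hij hham
    obtain ⟨v0, w0, hw, -⟩ := hham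
    -- the involutions and the product permutation
    let c : Fin m → Equiv.Perm V := fun k => Function.Involutive.toPerm (f k) (hinv k)
    have hcapp : ∀ k v, c k v = f k v := fun k v => rfl
    have hc2 : ∀ k, c k * c k = 1 := by
      intro k; ext v; simp [c, Equiv.Perm.mul_apply, hinv]; exact hinv k v
    have hcinv : ∀ k, (c k)⁻¹ = c k := fun k => inv_eq_of_mul_eq_one_left (hc2 k)
    let p : Equiv.Perm V := c i * c j
    have hpapp : ∀ v, p v = f i (f j v) := fun v => rfl
    have hpinv : p⁻¹ = c j * c i := by
      show (c i * c j)⁻¹ = _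
      rw [mul_inv_rev, hcinv, hcinv]
    have hpinvapp : ∀ v, p⁻¹ v = f j (f i v) := by
      intro v; rw [hpinv]; rfl
    have hconj : c j * p * c j = p⁻¹ := by
      show c j * (c i * c j) * c j = _
      rw [mul_assoc (c j) (c i * c j), mul_assoc (c i), hc2, mul_one, hpinv]
    -- the orbit relation
    set S : V → V → Prop := fun u v => p.SameCycle u v ∨ p.SameCycle u (f j v) with hS
    have transfer : ∀ {x y : V}, p.SameCycle x y → p.SameCycle (f j x) (f j y) := by
      intro x y h
      have := mySameCycle_conj hconj (hc2 j) h
      simpa [hcapp] using this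
    have step1 : ∀ u v, S (f j u) v → S u v := by
      intro u v h
      rcases h with h | h
      · right
        have := transfer h
        rwa [hinv j u] at this
      · left
        have := transfer h
        rwa [hinv j u, hinv j v] at this
    have step2 : ∀ u v, S (f i u) v → S (f j u) v := by
      intro u v h
      have hfi : f i u = p (f j u) := by rw [hpapp, hinv j u]
      rw [hfi] at h
      rcases h with h | h
      · exact Or.inl ((Equiv.Perm.sameCycle_apply_left).mp h)
      · exact Or.inr ((Equiv.Perm.sameCycle_apply_left).mp h)
    have walkS : ∀ (u v : V) (w : (SimpleGraph.fromEdgeSet (M i ∪ M j)).Walk u v), S u v := by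
      intro u v w
      induction w with
      | nil => exact Or.inl (Equiv.Perm.SameCycle.refl p _)
      | @cons a b vv h q ih =>
        rw [SimpleGraph.fromEdgeSet_adj] at h
        obtain ⟨hmem, hab⟩ := h
        rcases hmem with hmem | hmem
        · have : s(a, b) = s(a, f i a) := hfu i a _ hmem (Sym2.mem_mk_left _ _)
          rcases Sym2.eq_iff.mp this with ⟨-, hb⟩ | ⟨ha, -⟩
          · subst hb
            exact step1 a vv (step2 a vv ih)
          · exact absurd ha (hne i a)
        · have : s(a, b) = s(a, f j a) := hfu j a _ hmem (Sym2.mem_mk_left _ _)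
          rcases Sym2.eq_iff.mp this with ⟨-, hb⟩ | ⟨ha, -⟩
          · subst hb
            exact step1 a vv ih
          · exact absurd ha (hne j a)
    have reach : ∀ u v : V, S u v := by
      intro u v
      have hu : u ∈ w0.support := hw.mem_support u
      have hv : v ∈ w0.support := hw.mem_support v
      exact walkS u v (((w0.takeUntil u hu).reverse).append (w0.takeUntil v hv))
    -- powers of p preserve X
    have hpX : ∀ (k : ℤ) (v : V), v ∈ X → (p ^ k) v ∈ X := by
      intro k
      induction k using Int.induction_on with
      | zero => intro v hv; simpa using hv
      | succ k ih =>
        intro v hv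
        rw [zpow_add_one, Equiv.Perm.mul_apply]
        exact ih _ (by rw [hpapp]; exact hYX i _ (hXY j _ hv))
      | pred k ih =>
        intro v hv
        rw [zpow_sub_one, Equiv.Perm.mul_apply]
        exact ih _ (by rw [hpinvapp]; exact hYX j _ (hXY i _ hv))
    -- the permutation τ = σ i ⁻¹ * σ j on X
    let τ : Equiv.Perm {v : V // v ∈ X} := (ee j).trans (ee i).symm
    have hτapp : ∀ x : {v : V // v ∈ X}, (τ x : V) = f i (f j x) := fun x => rfl
    have hτinvapp : ∀ x : {v : V // v ∈ X}, (τ⁻¹ x : V) = f j (f i x) := fun x => rfl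
    have hττ : (σ i)⁻¹ * σ j = τ := by
      ext x
      show ((ee i).symm (g (g.symm (ee j x))) : V) = _
      rw [Equiv.apply_symm_apply]
      rfl
    -- coe of powers of τ
    have hτpow : ∀ (k : ℤ) (x : {v : V // v ∈ X}), ((τ ^ k) x : V) = (p ^ k) (x : V) := by
      intro k
      induction k using Int.induction_on with
      | zero => intro x; simp
      | succ k ih =>
        intro x
        rw [zpow_add_one, zpow_add_one, Equiv.Perm.mul_apply, Equiv.Perm.mul_apply,
          ih, hpapp, ← hτapp]
      | pred k ih =>
        intro x
        rw [zpow_sub_one, zpow_sub_one, Equiv.Perm.mul_apply, Equiv.Perm.mul_apply,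
          ih, hpinvapp, ← hτinvapp]
    -- τ has no fixed points
    have hτne : ∀ x : {v : V // v ∈ X}, τ x ≠ x := by
      intro x hx
      have h1 : f i (f j (x : V)) = (x : V) := by rw [← hτapp, hx]
      have h2 : f j (x : V) = f i (x : V) := by
        have := congrArg (f i) h1
        rwa [hinv i] at this
      have h3 : s((x : V), f i (x : V)) ∈ M j := by rw [← h2]; exact hfmem j x
      exact Set.disjoint_left.mp (hdisj i j hij) (hfmem i x) h3
    -- τ is transitive on X
    have hτsc : ∀ x y : {v : V // v ∈ X}, τ.SameCycle x y := by
      intro x y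
      rcases reach (x : V) (y : V) with ⟨k, hk⟩ | ⟨k, hk⟩
      · exact ⟨k, Subtype.ext (by rw [hτpow]; exact hk)⟩
      · exfalso
        have h1 : (p ^ k) (x : V) ∈ X := hpX k _ x.2
        rw [hk] at h1
        have h2 : f j (y : V) ∈ Y := hXY j _ y.2
        rcases hpart (f j (y : V)) with ⟨-, h⟩ | ⟨-, h⟩
        · exact h h2
        · exact h h1
    -- X is nonempty
    have hx0 : ∃ x : V, x ∈ X := by
      rcases hpart v0 with ⟨h, -⟩ | ⟨h, -⟩
      · exact ⟨v0, h⟩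
      · exact ⟨f i v0, hYX i v0 h⟩
    obtain ⟨x0, hx0⟩ := hx0
    have hcyc : τ.IsCycle := ⟨⟨x0, hx0⟩, hτne _, fun y _ => hτsc _ y⟩
    have hsupp : τ.support = Finset.univ := by
      apply Finset.eq_univ_iff_forall.mpr
      intro x
      exact Equiv.Perm.mem_support.mpr (hτne x)
    have hsc : τ.support.card = n := by
      rw [hsupp, Finset.card_univ, Fintype.card_coe, hX]
    have hsign : Equiv.Perm.sign τ = -1 := by
      rw [hcyc.sign, hsc, hn.neg_one_pow]
    intro heq
    have : Equiv.Perm.sign ((σ i)⁻¹ * σ j) = 1 := by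
      rw [map_mul, map_inv, heq, inv_mul_cancel]
    rw [hττ, hsign] at this
    exact absurd this (by decide)
  -- build the coloring
  have hC : ∀ i j : Fin m,
      (SimpleGraph.fromRel (fun i j : Fin m => IsHamCycleSet (M i ∪ M j))).Adj i j →
      (decide (Equiv.Perm.sign (σ i) = 1)) ≠ (decide (Equiv.Perm.sign (σ j) = 1)) := by
    intro i j hadj
    rw [SimpleGraph.fromRel_adj] at hadj
    obtain ⟨hij, hr⟩ := hadj
    have hsne : Equiv.Perm.sign (σ i) ≠ Equiv.Perm.sign (σ j) := by
      rcases hr with hr | hr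
      · exact key i j hij hr
      · exact fun h => key j i hij.symm hr h.symm
    intro h
    rcases Int.units_eq_one_or (Equiv.Perm.sign (σ i)) with h1 | h1 <;>
      rcases Int.units_eq_one_or (Equiv.Perm.sign (σ j)) with h2 | h2 <;>
      simp [h1, h2] at h hsne ⊢
  let C : (SimpleGraph.fromRel (fun i j : Fin m => IsHamCycleSet (M i ∪ M j))).Coloring Bool :=
    SimpleGraph.Coloring.mk (fun i => decide (Equiv.Perm.sign (σ i) = 1)) (fun {i j} h => hC i j h)
  have := C.colorable
  simpa using this
end

section
/- For every d ≥ 3, the hypercube Q_d has no perfect 1-factorization; that is, there is no partition of the edge set of Q_d into perfect matchings M_1, …, M_d such that M_i ∪ M_j is a Hamilton cycle for every pair i ≠ j. -/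
open SimpleGraph

section PM
variable {V : Type*} [DecidableEq V] {G : SimpleGraph V} {M : Set (Sym2 V)}

noncomputable def pmFun (hM : IsPM G M) (v : V) : V :=
  Sym2.Mem.other' (hM.2 v).exists.choose_spec.2

lemma pmFun_mem (hM : IsPM G M) (v : V) : s(v, pmFun hM v) ∈ M := by
  rw [pmFun, Sym2.other_spec' (hM.2 v).exists.choose_spec.2]
  exact (hM.2 v).exists.choose_spec.1

lemma pmFun_eq (hM : IsPM G M) {v w : V} (h : s(v, w) ∈ M) : pmFun hM v = w := by
  have h1 : s(v, pmFun hM v) = s(v, w) :=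
    (hM.2 v).unique ⟨pmFun_mem hM v, Sym2.mem_mk_left _ _⟩ ⟨h, Sym2.mem_mk_left _ _⟩
  exact Sym2.congr_right.mp h1

lemma pmFun_invol (hM : IsPM G M) : Function.Involutive (pmFun hM) := by
  intro v
  apply pmFun_eq hM
  rw [Sym2.eq_swap]
  exact pmFun_mem hM v

noncomputable def pmPerm (hM : IsPM G M) : Equiv.Perm V := (pmFun_invol hM).toPerm

lemma pmPerm_apply (hM : IsPM G M) (v : V) : pmPerm hM v = pmFun hM v := rfl

lemma pmPerm_adj (hM : IsPM G M) (v : V) : G.Adj v (pmPerm hM v) :=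
  (SimpleGraph.mem_edgeSet G).mp (hM.1 (pmFun_mem hM v))

lemma pmPerm_invol (hM : IsPM G M) (v : V) : pmPerm hM (pmPerm hM v) = v :=
  pmFun_invol hM v

lemma pmPerm_sq (hM : IsPM G M) : pmPerm hM * pmPerm hM = 1 := by
  ext v
  exact pmFun_invol hM v

end PM

lemma card_symmDiff_aux {α : Type*} [DecidableEq α] (u v : Finset α) :
    u.card + v.card = (symmDiff u v).card + 2 * (u ∩ v).card := by
  have h1 := Finset.card_sdiff_add_card_inter u v
  have h2 := Finset.card_sdiff_add_card_inter v u
  have h3 : (symmDiff u v).card = (u \ v).card + (v \ u).card := by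
    rw [symmDiff_def]
    exact Finset.card_union_of_disjoint disjoint_sdiff_sdiff
  rw [Finset.inter_comm v u] at h2
  omega

lemma cube_adj_parity {d : ℕ} {u v : Finset (Fin d)} (h : (cube d).Adj u v) :
    ¬ (Even u.card ↔ Even v.card) := by
  have h1 : (symmDiff u v).card = 1 := h
  have h2 := card_symmDiff_aux u v
  rw [Nat.even_iff, Nat.even_iff]
  omega

section Pair
variable {d : ℕ} {Mi Mj : Set (Sym2 (Finset (Fin d)))}

lemma pres_parity (hi : IsPM (cube d) Mi) (hj : IsPM (cube d) Mj) :
    ∀ x : Finset (Fin d), Even x.card ↔ Even ((pmPerm hi * pmPerm hj) x).card := by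
  intro x
  have h1 := cube_adj_parity (pmPerm_adj hj x)
  have h2 := cube_adj_parity (pmPerm_adj hi (pmPerm hj x))
  rw [Equiv.Perm.mul_apply]
  tauto

lemma zpow_parity (hi : IsPM (cube d) Mi) (hj : IsPM (cube d) Mj) (k : ℤ)
    (x : Finset (Fin d)) :
    Even x.card ↔ Even (((pmPerm hi * pmPerm hj) ^ k) x).card := by
  set p := pmPerm hi * pmPerm hj with hp
  have hN : ∀ (n : ℕ) (x : Finset (Fin d)), Even x.card ↔ Even ((p ^ n) x).card := by
    intro n
    induction n with
    | zero => simp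
    | succ n ih =>
      intro x
      rw [pow_succ, Equiv.Perm.mul_apply]
      exact (pres_parity hi hj x).trans (ih _)
  obtain ⟨n, rfl | rfl⟩ := Int.eq_nat_or_neg k
  · rw [zpow_natCast]; exact hN n x
  · rw [zpow_neg, zpow_natCast]
    have h := hN n ((p ^ n)⁻¹ x)
    rwa [show (p ^ n) ((p ^ n)⁻¹ x) = x from Equiv.apply_symm_apply (p ^ n) x, Iff.comm] at h

lemma reach_lemma (hi : IsPM (cube d) Mi) (hj : IsPM (cube d) Mj)
    {x y : Finset (Fin d)} (w : (fromEdgeSet (Mi ∪ Mj)).Walk x y) :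
    (∃ k : ℤ, ((pmPerm hi * pmPerm hj) ^ k) x = y) ∨
      (∃ k : ℤ, ((pmPerm hi * pmPerm hj) ^ k) (pmPerm hi x) = y) := by
  induction w with
  | nil => exact Or.inl ⟨0, by simp⟩
  | @cons x z y h q ih =>
    set A := pmPerm hi with hA
    set B := pmPerm hj with hB
    set p := A * B with hp
    have hz : z = A x ∨ z = B x := by
      rw [fromEdgeSet_adj] at h
      rcases h.1 with h' | h'
      · exact Or.inl (pmFun_eq hi h').symm
      · exact Or.inr (pmFun_eq hj h').symm
    rcases hz with rfl | rfl
    · rcases ih with ⟨k, hk⟩ | ⟨k, hk⟩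
      · exact Or.inr ⟨k, hk⟩
      · refine Or.inl ⟨k, ?_⟩
        rwa [pmPerm_invol hi x] at hk
    · rcases ih with ⟨k, hk⟩ | ⟨k, hk⟩
      · refine Or.inr ⟨k - 1, ?_⟩
        have hpb : p (B x) = A x := by
          rw [hp, Equiv.Perm.mul_apply, pmPerm_invol hj x]
        rw [zpow_sub_one, Equiv.Perm.mul_apply, ← hpb, show p⁻¹ (p (B x)) = B x from Equiv.symm_apply_apply p (B x)]
        exact hk
      · refine Or.inl ⟨k + 1, ?_⟩
        have hab : A (B x) = p x := by rw [hp, Equiv.Perm.mul_apply]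
        rw [hab] at hk
        rwa [zpow_add_one, Equiv.Perm.mul_apply]
    
lemma trans_lemma (hi : IsPM (cube d) Mi) (hj : IsPM (cube d) Mj)
    (hham : IsHamCycleSet (Mi ∪ Mj)) {u v : Finset (Fin d)}
    (hu : Even u.card) (hv : Even v.card) :
    ∃ k : ℤ, ((pmPerm hi * pmPerm hj) ^ k) u = v := by
  obtain ⟨v0, w, hw, -⟩ := hham
  have hu' := hw.mem_support u
  have hv' := hw.mem_support v
  have wuv := (w.takeUntil u hu').reverse.append (w.takeUntil v hv')
  rcases reach_lemma hi hj wuv with h | ⟨k, hk⟩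
  · exact h
  · exfalso
    have h1 := zpow_parity hi hj k (pmPerm hi u)
    have h2 := cube_adj_parity (pmPerm_adj hi u)
    rw [hk] at h1
    tauto

end Pair

lemma even_card_evens {d : ℕ} (hd : 2 ≤ d) :
    Even (Fintype.card {s : Finset (Fin d) // Even s.card}) := by
  set i0 : Fin d := ⟨0, by omega⟩ with hi0
  have flip : ∀ s : Finset (Fin d), Even (symmDiff s {i0}).card ↔ ¬Even s.card := by
    intro s
    have h := card_symmDiff_aux s {i0}
    rw [Finset.card_singleton] at h
    rw [Nat.even_iff, Nat.even_iff]
    omega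
  let e : {s : Finset (Fin d) // Even s.card} ≃ {s : Finset (Fin d) // ¬Even s.card} :=
  { toFun := fun s => ⟨symmDiff s.1 {i0}, fun h => (flip s.1).mp h s.2⟩
    invFun := fun s => ⟨symmDiff s.1 {i0}, (flip s.1).mpr s.2⟩
    left_inv := fun s => Subtype.ext (symmDiff_symmDiff_cancel_right _ _)
    right_inv := fun s => Subtype.ext (symmDiff_symmDiff_cancel_right _ _) }
  have hc := Fintype.card_congr e
  have hcompl := Fintype.card_subtype_compl (fun s : Finset (Fin d) => Even s.card)
  have hle := Fintype.card_subtype_le (fun s : Finset (Fin d) => Even s.card)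
  rw [Fintype.card_finset, Fintype.card_fin] at hcompl hle
  have e1 : (2 : ℕ) ^ d = 2 * 2 ^ (d - 1) := by
    rw [← pow_succ']; congr 1; omega
  have e2 : (2 : ℕ) ^ (d - 1) = 2 * 2 ^ (d - 2) := by
    rw [← pow_succ']; congr 1; omega
  rw [Nat.even_iff]
  omega

lemma subtypePerm_congr {α : Type*} {pp : α → Prop} {f g : Equiv.Perm α} (h : f = g)
    (hf : ∀ x, pp x ↔ pp (f x)) (hg : ∀ x, pp x ↔ pp (g x)) :
    f.subtypePerm (fun x => (hf x).symm) = g.subtypePerm (fun x => (hg x).symm) := by subst h; rfl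

lemma pair_sign {d : ℕ} (hd : 3 ≤ d) {Mi Mj : Set (Sym2 (Finset (Fin d)))}
    (hi : IsPM (cube d) Mi) (hj : IsPM (cube d) Mj)
    (hham : IsHamCycleSet (Mi ∪ Mj)) :
    Equiv.Perm.sign ((pmPerm hi * pmPerm hj).subtypePerm (p := fun s : Finset (Fin d) => Even s.card) (fun x => (pres_parity hi hj x).symm)) = -1 := by
  set p := pmPerm hi * pmPerm hj with hp
  set q := p.subtypePerm (p := fun s : Finset (Fin d) => Even s.card) (fun x => (pres_parity hi hj x).symm) with hq
  have key : ∀ a b : {s : Finset (Fin d) // Even s.card}, ∃ k : ℤ, (q ^ k) a = b := by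
    intro a b
    obtain ⟨k, hk⟩ := trans_lemma hi hj hham a.2 b.2
    refine ⟨k, ?_⟩
    rw [hq, Equiv.Perm.subtypePerm_zpow]
    exact Subtype.ext hk
  set i0 : Fin d := ⟨0, by omega⟩ with hi0d
  set i1 : Fin d := ⟨1, by omega⟩ with hi1d
  have h01 : i0 ≠ i1 := by simp [hi0d, hi1d, Fin.ext_iff]
  let e0 : {s : Finset (Fin d) // Even s.card} := ⟨∅, by simp⟩
  let e2 : {s : Finset (Fin d) // Even s.card} :=
    ⟨{i0, i1}, by rw [Finset.card_insert_of_notMem (by simp [h01]), Finset.card_singleton]; exact ⟨1, rfl⟩⟩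
  have he02 : e0 ≠ e2 := by
    intro h
    have : (∅ : Finset (Fin d)) = {i0, i1} := congrArg Subtype.val h
    exact (Finset.insert_ne_empty i0 {i1}) this.symm
  have hnofix : ∀ a : {s : Finset (Fin d) // Even s.card}, q a ≠ a := by
    intro a ha
    have hb : ∃ b, b ≠ a := by
      by_cases h : a = e0
      · exact ⟨e2, by rw [h]; exact (Ne.symm he02)⟩
      · exact ⟨e0, fun h' => h h'.symm⟩
    obtain ⟨b, hba⟩ := hb
    obtain ⟨k, hk⟩ := key a b
    rw [Equiv.Perm.zpow_apply_eq_self_of_apply_eq_self ha k] at hk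
    exact hba hk.symm
  have hcyc : q.IsCycle := ⟨e0, hnofix e0, fun y _ => key e0 y⟩
  have hsupp : q.support = Finset.univ :=
    Finset.eq_univ_iff_forall.mpr fun a => Equiv.Perm.mem_support.mpr (hnofix a)
  rw [hcyc.sign, hsupp, Finset.card_univ,
    (even_card_evens (by omega)).neg_one_pow]

/-- For every `d ≥ 3`, the hypercube `Q_d` has no perfect 1-factorization. -/
theorem statement2 (d : ℕ) (hd : 3 ≤ d) :
    ¬ ∃ M : Fin d → Set (Sym2 (Finset (Fin d))),
        IsFactorization (cube d) M ∧
        ∀ i j : Fin d, i ≠ j → IsHamCycleSet (M i ∪ M j) := by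
  rintro ⟨M, ⟨hPM, hdisj, -⟩, hham⟩
  set i0 : Fin d := ⟨0, by omega⟩ with hi0
  set i1 : Fin d := ⟨1, by omega⟩ with hi1
  set i2 : Fin d := ⟨2, by omega⟩ with hi2
  have h01 : i0 ≠ i1 := by simp [hi0, hi1, Fin.ext_iff]
  have h12 : i1 ≠ i2 := by simp [hi1, hi2, Fin.ext_iff]
  have h02 : i0 ≠ i2 := by simp [hi0, hi2, Fin.ext_iff]
  have s01 := pair_sign hd (hPM i0) (hPM i1) (hham i0 i1 h01)
  have s12 := pair_sign hd (hPM i1) (hPM i2) (hham i1 i2 h12)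
  have s02 := pair_sign hd (hPM i0) (hPM i2) (hham i0 i2 h02)
  have hmul : (pmPerm (hPM i0) * pmPerm (hPM i1)).subtypePerm
        (p := fun s : Finset (Fin d) => Even s.card) (fun x => (pres_parity (hPM i0) (hPM i1) x).symm) *
      (pmPerm (hPM i1) * pmPerm (hPM i2)).subtypePerm (p := fun s : Finset (Fin d) => Even s.card) (fun x => (pres_parity (hPM i1) (hPM i2) x).symm) =
      (pmPerm (hPM i0) * pmPerm (hPM i2)).subtypePerm (p := fun s : Finset (Fin d) => Even s.card) (fun x => (pres_parity (hPM i0) (hPM i2) x).symm) := by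
    rw [Equiv.Perm.subtypePerm_mul]
    apply subtypePerm_congr
    rw [mul_assoc, ← mul_assoc (pmPerm (hPM i1)), pmPerm_sq, one_mul]
    · exact fun x => (pres_parity (hPM i1) (hPM i2) x).trans (pres_parity (hPM i0) (hPM i1) _)
    · exact pres_parity (hPM i0) (hPM i2)
  have hsgn := congrArg Equiv.Perm.sign hmul
  rw [map_mul, s01, s12, s02] at hsgn
  norm_num at hsgn
end

section
/- There is a 1-factorization M_1, M_2, M_3, M_4 of the hypercube Q_4 such that M_4 ∪ M_i is a Hamilton cycle for each i = 1, 2, 3, and M_i ∪ M_j is not a Hamilton cycle for any distinct i, j ∈ {1, 2, 3}; that is, the graph G[M] recording Hamilton-cycle pairs is isomorphic to the complete bipartite graph K_{3,1}. -/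
open SimpleGraph

set_option maxRecDepth 100000
set_option maxHeartbeats 2000000

abbrev V4 := Finset (Fin 4)

instance : DecidableRel (cube 4).Adj :=
  fun u v => decidable_of_iff ((symmDiff u v).card = 1) Iff.rfl

instance (s : Finset (Sym2 V4)) (e : Sym2 V4) : Decidable (e ∈ (↑s : Set (Sym2 V4))) :=
  decidable_of_iff (e ∈ s) Finset.mem_coe

instance (s : Finset (Sym2 V4)) : DecidableRel (fromEdgeSet (↑s : Set (Sym2 V4))).Adj :=
  fun u v => decidable_of_iff (s(u, v) ∈ s ∧ u ≠ v) (fromEdgeSet_adj _).symm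

def L0 : List (Sym2 V4) := [s(∅, {2}), s({0}, {0, 3}), s({1}, {1, 2}), s({0, 1}, {0, 1, 3}), s({0, 2}, {0, 1, 2}), s({3}, {1, 3}), s({2, 3}, {1, 2, 3}), s({0, 2, 3}, {0, 1, 2, 3})]

def F0 : Finset (Sym2 V4) := Finset.mk (↑L0) (by decide)

def L1 : List (Sym2 V4) := [s(∅, {0}), s({1}, {1, 3}), s({0, 1}, {0, 1, 2}), s({2}, {2, 3}), s({0, 2}, {0, 2, 3}), s({1, 2}, {1, 2, 3}), s({3}, {0, 3}), s({0, 1, 3}, {0, 1, 2, 3})]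

def F1 : Finset (Sym2 V4) := Finset.mk (↑L1) (by decide)

def L2 : List (Sym2 V4) := [s(∅, {1}), s({0}, {0, 1}), s({2}, {0, 2}), s({1, 2}, {0, 1, 2}), s({3}, {2, 3}), s({0, 3}, {0, 2, 3}), s({1, 3}, {0, 1, 3}), s({1, 2, 3}, {0, 1, 2, 3})]

def F2 : Finset (Sym2 V4) := Finset.mk (↑L2) (by decide)

def L3 : List (Sym2 V4) := [s(∅, {3}), s({0}, {0, 2}), s({1}, {0, 1}), s({2}, {1, 2}), s({0, 1, 2}, {0, 1, 2, 3}), s({0, 3}, {0, 1, 3}), s({1, 3}, {1, 2, 3}), s({2, 3}, {0, 2, 3})]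

def F3 : Finset (Sym2 V4) := Finset.mk (↑L3) (by decide)

def F : Fin 4 → Finset (Sym2 V4) := ![F0, F1, F2, F3]

lemma finsetBAll {α : Type*} [DecidableEq α] {P : α → Prop} (l : List α) {nd}
    (h : ∀ k : Fin l.length, P (l.get k)) :
    ∀ e ∈ (Finset.mk (↑l) nd : Finset α), P e := by
  intro e he
  obtain ⟨k, hk⟩ := List.mem_iff_get.mp (Multiset.mem_coe.mp (Finset.mem_mk.mp he))
  exact hk ▸ h k

lemma clOf (PL : List (V4 × V4)) {nd} (S : Finset V4)
    (h : ∀ k : Fin PL.length, ((PL.get k).1 ∈ S ↔ (PL.get k).2 ∈ S)) :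
    ∀ a b : V4,
      s(a, b) ∈ (↑(Finset.mk (↑(PL.map fun p => s(p.1, p.2))) nd : Finset (Sym2 V4)) :
        Set (Sym2 V4)) → (a ∈ S ↔ b ∈ S) := by
  intro a b hm
  obtain ⟨k, hk⟩ := List.mem_iff_get.mp (Multiset.mem_coe.mp (Finset.mem_mk.mp hm))
  rw [List.get_eq_getElem, List.getElem_map] at hk
  simp only [List.get_eq_getElem] at h
  rcases Sym2.eq_iff.mp hk with ⟨h1, h2⟩ | ⟨h1, h2⟩
  · rw [← h1, ← h2]
    exact h ⟨k, by simpa using k.2⟩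
  · rw [← h1, ← h2]
    exact (h ⟨k, by simpa using k.2⟩).symm

lemma fsub0 : ∀ e ∈ F0, e ∈ (cube 4).edgeSet := finsetBAll L0 (by decide)
lemma fsub1 : ∀ e ∈ F1, e ∈ (cube 4).edgeSet := finsetBAll L1 (by decide)
lemma fsub2 : ∀ e ∈ F2, e ∈ (cube 4).edgeSet := finsetBAll L2 (by decide)
lemma fsub3 : ∀ e ∈ F3, e ∈ (cube 4).edgeSet := finsetBAll L3 (by decide)

lemma Fsub : ∀ i : Fin 4, (↑(F i) : Set (Sym2 V4)) ⊆ (cube 4).edgeSet := fun i =>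
  match i with
  | 0 => fun _ he => fsub0 _ he
  | 1 => fun _ he => fsub1 _ he
  | 2 => fun _ he => fsub2 _ he
  | 3 => fun _ he => fsub3 _ he

lemma Fcover : ∀ i : Fin 4, ∀ v : V4, ∃ e ∈ F i, v ∈ e := by decide

lemma FfiltD : ∀ i : Fin 4, ∀ v : V4, ((F i).filter (v ∈ ·)).card ≤ 1 := by decide

lemma Funiq : ∀ i : Fin 4, ∀ v : V4, ∃! e, e ∈ (↑(F i) : Set (Sym2 V4)) ∧ v ∈ e := by
  intro i v
  obtain ⟨e, he, hv⟩ := Fcover i v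
  refine ⟨e, ⟨he, hv⟩, fun e' ⟨he', hv'⟩ => ?_⟩
  exact Finset.card_le_one.mp (FfiltD i v) e' (Finset.mem_filter.mpr ⟨he', hv'⟩)
    e (Finset.mem_filter.mpr ⟨he, hv⟩)

lemma fdisj01 : ∀ e ∈ F0, e ∉ F1 := finsetBAll L0 (by decide)
lemma fdisj02 : ∀ e ∈ F0, e ∉ F2 := finsetBAll L0 (by decide)
lemma fdisj03 : ∀ e ∈ F0, e ∉ F3 := finsetBAll L0 (by decide)
lemma fdisj12 : ∀ e ∈ F1, e ∉ F2 := finsetBAll L1 (by decide)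
lemma fdisj13 : ∀ e ∈ F1, e ∉ F3 := finsetBAll L1 (by decide)
lemma fdisj23 : ∀ e ∈ F2, e ∉ F3 := finsetBAll L2 (by decide)

lemma Fdisj : ∀ i j : Fin 4, i ≠ j → Disjoint (F i) (F j) := by
  have d01 := Finset.disjoint_left.mpr fdisj01
  have d02 := Finset.disjoint_left.mpr fdisj02
  have d03 := Finset.disjoint_left.mpr fdisj03
  have d12 := Finset.disjoint_left.mpr fdisj12
  have d13 := Finset.disjoint_left.mpr fdisj13
  have d23 := Finset.disjoint_left.mpr fdisj23
  intro i j hij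
  fin_cases i <;> fin_cases j <;>
    first
      | exact absurd rfl hij
      | assumption
      | exact d01.symm
      | exact d02.symm
      | exact d03.symm
      | exact d12.symm
      | exact d13.symm
      | exact d23.symm

lemma Fall : ∀ u v : V4, (cube 4).Adj u v → ∃ i : Fin 4, s(u, v) ∈ F i := by decide

lemma Funion : (⋃ i, (↑(F i) : Set (Sym2 V4))) = (cube 4).edgeSet := by
  ext e
  simp only [Set.mem_iUnion, Finset.mem_coe]
  constructor
  · rintro ⟨i, hi⟩
    exact Fsub i hi
  · induction e using Sym2.ind with
    | _ u v => exact fun h => Fall u v ((SimpleGraph.mem_edgeSet _).mp h)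

lemma not_ham (E : Set (Sym2 V4)) (S : Finset V4)
    (hcl : ∀ a b : V4, s(a, b) ∈ E → (a ∈ S ↔ b ∈ S))
    (x y : V4) (hx : x ∈ S) (hy : y ∉ S) : ¬ IsHamCycleSet E := by
  rintro ⟨v, w, hw, -⟩
  have key : ∀ {u u' : V4} (p : (fromEdgeSet E).Walk u u'), u ∈ S → ∀ a ∈ p.support, a ∈ S := by
    intro u u' p
    induction p with
    | nil =>
      intro hu a ha
      rw [SimpleGraph.Walk.support_nil, List.mem_singleton] at ha
      exact ha ▸ hu
    | @cons b c d h p ih =>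
      intro hu a ha
      rw [SimpleGraph.Walk.support_cons, List.mem_cons] at ha
      rcases ha with rfl | ha
      · exact hu
      · exact ih ((hcl _ _ ((fromEdgeSet_adj _).mp h).1).mp hu) a ha
  have key2 : ∀ {u u' : V4} (p : (fromEdgeSet E).Walk u u'), u ∉ S → ∀ a ∈ p.support, a ∉ S := by
    intro u u' p
    induction p with
    | nil =>
      intro hu a ha
      rw [SimpleGraph.Walk.support_nil, List.mem_singleton] at ha
      exact ha ▸ hu
    | @cons b c d h p ih =>
      intro hu a ha
      rw [SimpleGraph.Walk.support_cons, List.mem_cons] at ha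
      rcases ha with rfl | ha
      · exact hu
      · exact ih (fun hc => hu ((hcl _ _ ((fromEdgeSet_adj _).mp h).1).mpr hc)) a ha
  by_cases hv : v ∈ S
  · exact hy (key w hv y (hw.mem_support y))
  · exact key2 w hv x (hw.mem_support x) hx

def hamL0 : List (Sym2 V4) := [s(∅, {3}), s({0}, {0, 2}), s({1}, {0, 1}), s({2}, {1, 2}), s({0, 1, 2}, {0, 1, 2, 3}), s({0, 3}, {0, 1, 3}), s({1, 3}, {1, 2, 3}), s({2, 3}, {0, 2, 3}), s(∅, {2}), s({0}, {0, 3}), s({1}, {1, 2}), s({0, 1}, {0, 1, 3}), s({0, 2}, {0, 1, 2}), s({3}, {1, 3}), s({2, 3}, {1, 2, 3}), s({0, 2, 3}, {0, 1, 2, 3})]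

def hamE0 : Finset (Sym2 V4) := Finset.mk (↑hamL0) (by decide)

lemma hamEeq0 : F 3 ∪ F 0 = hamE0 := by decide

def hamW0 : (fromEdgeSet (↑hamE0 : Set (Sym2 V4))).Walk (∅ : V4) (∅ : V4) :=
  SimpleGraph.Walk.cons (by decide : (fromEdgeSet (↑hamE0 : Set (Sym2 V4))).Adj (∅) ({3})) (SimpleGraph.Walk.cons (by decide : (fromEdgeSet (↑hamE0 : Set (Sym2 V4))).Adj ({3}) ({1, 3})) (SimpleGraph.Walk.cons (by decide : (fromEdgeSet (↑hamE0 : Set (Sym2 V4))).Adj ({1, 3}) ({1, 2, 3})) (SimpleGraph.Walk.cons (by decide : (fromEdgeSet (↑hamE0 : Set (Sym2 V4))).Adj ({1, 2, 3}) ({2, 3})) (SimpleGraph.Walk.cons (by decide : (fromEdgeSet (↑hamE0 : Set (Sym2 V4))).Adj ({2, 3}) ({0, 2, 3})) (SimpleGraph.Walk.cons (by decide : (fromEdgeSet (↑hamE0 : Set (Sym2 V4))).Adj ({0, 2, 3}) ({0, 1, 2, 3})) (SimpleGraph.Walk.cons (by decide : (fromEdgeSet (↑hamE0 : Set (Sym2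 V4))).Adj ({0, 1, 2, 3}) ({0, 1, 2})) (SimpleGraph.Walk.cons (by decide : (fromEdgeSet (↑hamE0 : Set (Sym2 V4))).Adj ({0, 1, 2}) ({0, 2})) (SimpleGraph.Walk.cons (by decide : (fromEdgeSet (↑hamE0 : Set (Sym2 V4))).Adj ({0, 2}) ({0})) (SimpleGraph.Walk.cons (by decide : (fromEdgeSet (↑hamE0 : Set (Sym2 V4))).Adj ({0}) ({0, 3})) (SimpleGraph.Walk.cons (by decide : (fromEdgeSet (↑hamE0 : Set (Sym2 V4))).Adj ({0, 3}) ({0, 1, 3})) (SimpleGraph.Walk.cons (by decide : (fromEdgeSet (↑hamE0 : Set (Sym2 V4))).Adj ({0, 1, 3}) ({0, 1})) (SimpleGraph.Walk.cons (by decide : (fromEdgeSet (↑hamE0 : Set (Sym2 V4))).Adj ({0, 1}) ({1})) (SimpleGraph.Walk.cons (by decide : (fromEdgeSet (↑hamE0 : Set (Sym2 V4))).Adj ({1}) ({1, 2})) (SimpleGraph.Walk.cons (by decide : (fromEdgeSet (↑hamE0 : Set (Sym2 V4))).Adj ({1, 2}) ({2})) (SimpleGraph.Walk.cons (by decide : (fromEdgeSet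 (↑hamE0 : Set (Sym2 V4))).Adj ({2}) (∅)) (SimpleGraph.Walk.nil))))))))))))))))

lemma hamWedges0 : (hamW0).edges = ([s(∅, {3}), s({3}, {1, 3}), s({1, 3}, {1, 2, 3}), s({1, 2, 3}, {2, 3}), s({2, 3}, {0, 2, 3}), s({0, 2, 3}, {0, 1, 2, 3}), s({0, 1, 2, 3}, {0, 1, 2}), s({0, 1, 2}, {0, 2}), s({0, 2}, {0}), s({0}, {0, 3}), s({0, 3}, {0, 1, 3}), s({0, 1, 3}, {0, 1}), s({0, 1}, {1}), s({1}, {1, 2}), s({1, 2}, {2}), s({2}, ∅)] : List (Sym2 V4)) := by decide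

lemma hamEdges0 : ∀ e ∈ hamE0, e ∈ (hamW0).edges :=
  finsetBAll hamL0 (fun k => by rw [hamWedges0]; revert k; decide)

lemma ham0 : IsHamCycleSet (↑hamE0 : Set (Sym2 V4)) := by
  refine ⟨∅, hamW0, ?_, fun e he => hamEdges0 e he⟩
  exact (SimpleGraph.Walk.isHamiltonianCycle_iff_isCycle_and_support_count_tail_eq_one).mpr
    ⟨⟨⟨⟨by decide⟩, by simp [hamW0]⟩, by decide⟩, by decide⟩

lemma pos30 : IsHamCycleSet ((↑(F 3) : Set (Sym2 V4)) ∪ ↑(F 0)) := by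
  rw [← Finset.coe_union, hamEeq0]; exact ham0

lemma pos03 : IsHamCycleSet ((↑(F 0) : Set (Sym2 V4)) ∪ ↑(F 3)) := by
  rw [Set.union_comm, ← Finset.coe_union, hamEeq0]; exact ham0

def hamL1 : List (Sym2 V4) := [s(∅, {3}), s({0}, {0, 2}), s({1}, {0, 1}), s({2}, {1, 2}), s({0, 1, 2}, {0, 1, 2, 3}), s({0, 3}, {0, 1, 3}), s({1, 3}, {1, 2, 3}), s({2, 3}, {0, 2, 3}), s(∅, {0}), s({1}, {1, 3}), s({0, 1}, {0, 1, 2}), s({2}, {2, 3}), s({0, 2}, {0, 2, 3}), s({1, 2}, {1, 2, 3}), s({3}, {0, 3}), s({0, 1, 3}, {0, 1, 2, 3})]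

def hamE1 : Finset (Sym2 V4) := Finset.mk (↑hamL1) (by decide)

lemma hamEeq1 : F 3 ∪ F 1 = hamE1 := by decide

def hamW1 : (fromEdgeSet (↑hamE1 : Set (Sym2 V4))).Walk (∅ : V4) (∅ : V4) :=
  SimpleGraph.Walk.cons (by decide : (fromEdgeSet (↑hamE1 : Set (Sym2 V4))).Adj (∅) ({3})) (SimpleGraph.Walk.cons (by decide : (fromEdgeSet (↑hamE1 : Set (Sym2 V4))).Adj ({3}) ({0, 3})) (SimpleGraph.Walk.cons (by decide : (fromEdgeSet (↑hamE1 : Set (Sym2 V4))).Adj ({0, 3}) ({0, 1, 3})) (SimpleGraph.Walk.cons (by decide : (fromEdgeSet (↑hamE1 : Set (Sym2 V4))).Adj ({0, 1, 3}) ({0, 1, 2, 3})) (SimpleGraph.Walk.cons (by decide : (fromEdgeSet (↑hamE1 : Set (Sym2 V4))).Adj ({0, 1, 2, 3}) ({0, 1, 2})) (SimpleGraph.Walk.cons (by decide : (fromEdgeSet (↑hamE1 : Set (Sym2 V4))).Adj ({0, 1, 2}) ({0, 1})) (SimpleGraph.Walk.cons (by decide : (fromEdgeSet (↑hamE1 :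 Set (Sym2 V4))).Adj ({0, 1}) ({1})) (SimpleGraph.Walk.cons (by decide : (fromEdgeSet (↑hamE1 : Set (Sym2 V4))).Adj ({1}) ({1, 3})) (SimpleGraph.Walk.cons (by decide : (fromEdgeSet (↑hamE1 : Set (Sym2 V4))).Adj ({1, 3}) ({1, 2, 3})) (SimpleGraph.Walk.cons (by decide : (fromEdgeSet (↑hamE1 : Set (Sym2 V4))).Adj ({1, 2, 3}) ({1, 2})) (SimpleGraph.Walk.cons (by decide : (fromEdgeSet (↑hamE1 : Set (Sym2 V4))).Adj ({1, 2}) ({2})) (SimpleGraph.Walk.cons (by decide : (fromEdgeSet (↑hamE1 : Set (Sym2 V4))).Adj ({2}) ({2, 3})) (SimpleGraph.Walk.cons (by decide : (fromEdgeSet (↑hamE1 : Set (Sym2 V4))).Adj ({2, 3}) ({0, 2, 3})) (SimpleGraph.Walk.cons (by decide : (fromEdgeSet (↑hamE1 : Set (Sym2 V4))).Adj ({0, 2, 3}) ({0, 2})) (SimpleGraph.Walk.cons (by decide : (fromEdgeSet (↑hamE1 : Set (Sym2 V4))).Adj ({0, 2}) ({0})) (SimpleGraph.Walk.cons (by decide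 : (fromEdgeSet (↑hamE1 : Set (Sym2 V4))).Adj ({0}) (∅)) (SimpleGraph.Walk.nil))))))))))))))))

lemma hamWedges1 : (hamW1).edges = ([s(∅, {3}), s({3}, {0, 3}), s({0, 3}, {0, 1, 3}), s({0, 1, 3}, {0, 1, 2, 3}), s({0, 1, 2, 3}, {0, 1, 2}), s({0, 1, 2}, {0, 1}), s({0, 1}, {1}), s({1}, {1, 3}), s({1, 3}, {1, 2, 3}), s({1, 2, 3}, {1, 2}), s({1, 2}, {2}), s({2}, {2, 3}), s({2, 3}, {0, 2, 3}), s({0, 2, 3}, {0, 2}), s({0, 2}, {0}), s({0}, ∅)] : List (Sym2 V4)) := by decide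

lemma hamEdges1 : ∀ e ∈ hamE1, e ∈ (hamW1).edges :=
  finsetBAll hamL1 (fun k => by rw [hamWedges1]; revert k; decide)

lemma ham1 : IsHamCycleSet (↑hamE1 : Set (Sym2 V4)) := by
  refine ⟨∅, hamW1, ?_, fun e he => hamEdges1 e he⟩
  exact (SimpleGraph.Walk.isHamiltonianCycle_iff_isCycle_and_support_count_tail_eq_one).mpr
    ⟨⟨⟨⟨by decide⟩, by simp [hamW1]⟩, by decide⟩, by decide⟩

lemma pos31 : IsHamCycleSet ((↑(F 3) : Set (Sym2 V4)) ∪ ↑(F 1)) := by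
  rw [← Finset.coe_union, hamEeq1]; exact ham1

lemma pos13 : IsHamCycleSet ((↑(F 1) : Set (Sym2 V4)) ∪ ↑(F 3)) := by
  rw [Set.union_comm, ← Finset.coe_union, hamEeq1]; exact ham1

def hamL2 : List (Sym2 V4) := [s(∅, {3}), s({0}, {0, 2}), s({1}, {0, 1}), s({2}, {1, 2}), s({0, 1, 2}, {0, 1, 2, 3}), s({0, 3}, {0, 1, 3}), s({1, 3}, {1, 2, 3}), s({2, 3}, {0, 2, 3}), s(∅, {1}), s({0}, {0, 1}), s({2}, {0, 2}), s({1, 2}, {0, 1, 2}), s({3}, {2, 3}), s({0, 3}, {0, 2, 3}), s({1, 3}, {0, 1, 3}), s({1, 2, 3}, {0, 1, 2, 3})]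

def hamE2 : Finset (Sym2 V4) := Finset.mk (↑hamL2) (by decide)

lemma hamEeq2 : F 3 ∪ F 2 = hamE2 := by decide

def hamW2 : (fromEdgeSet (↑hamE2 : Set (Sym2 V4))).Walk (∅ : V4) (∅ : V4) :=
  SimpleGraph.Walk.cons (by decide : (fromEdgeSet (↑hamE2 : Set (Sym2 V4))).Adj (∅) ({3})) (SimpleGraph.Walk.cons (by decide : (fromEdgeSet (↑hamE2 : Set (Sym2 V4))).Adj ({3}) ({2, 3})) (SimpleGraph.Walk.cons (by decide : (fromEdgeSet (↑hamE2 : Set (Sym2 V4))).Adj ({2, 3}) ({0, 2, 3})) (SimpleGraph.Walk.cons (by decide : (fromEdgeSet (↑hamE2 : Set (Sym2 V4))).Adj ({0, 2, 3}) ({0, 3})) (SimpleGraph.Walk.cons (by decide : (fromEdgeSet (↑hamE2 : Set (Sym2 V4))).Adj ({0, 3}) ({0, 1, 3})) (SimpleGraph.Walk.cons (by decide : (fromEdgeSet (↑hamE2 : Set (Sym2 V4))).Adj ({0, 1, 3}) ({1, 3})) (SimpleGraph.Walk.cons (by decide : (fromEdgeSet (↑hamE2 : Set (Sym2 V4))).Adj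 ({1, 3}) ({1, 2, 3})) (SimpleGraph.Walk.cons (by decide : (fromEdgeSet (↑hamE2 : Set (Sym2 V4))).Adj ({1, 2, 3}) ({0, 1, 2, 3})) (SimpleGraph.Walk.cons (by decide : (fromEdgeSet (↑hamE2 : Set (Sym2 V4))).Adj ({0, 1, 2, 3}) ({0, 1, 2})) (SimpleGraph.Walk.cons (by decide : (fromEdgeSet (↑hamE2 : Set (Sym2 V4))).Adj ({0, 1, 2}) ({1, 2})) (SimpleGraph.Walk.cons (by decide : (fromEdgeSet (↑hamE2 : Set (Sym2 V4))).Adj ({1, 2}) ({2})) (SimpleGraph.Walk.cons (by decide : (fromEdgeSet (↑hamE2 : Set (Sym2 V4))).Adj ({2}) ({0, 2})) (SimpleGraph.Walk.cons (by decide : (fromEdgeSet (↑hamE2 : Set (Sym2 V4))).Adj ({0, 2}) ({0})) (SimpleGraph.Walk.cons (by decide : (fromEdgeSet (↑hamE2 : Set (Sym2 V4))).Adj ({0}) ({0, 1})) (SimpleGraph.Walk.cons (by decide : (fromEdgeSet (↑hamE2 : Set (Sym2 V4))).Adj ({0, 1}) ({1})) (SimpleGraph.Walk.cons (by decide : (fromEdgeSet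 (↑hamE2 : Set (Sym2 V4))).Adj ({1}) (∅)) (SimpleGraph.Walk.nil))))))))))))))))

lemma hamWedges2 : (hamW2).edges = ([s(∅, {3}), s({3}, {2, 3}), s({2, 3}, {0, 2, 3}), s({0, 2, 3}, {0, 3}), s({0, 3}, {0, 1, 3}), s({0, 1, 3}, {1, 3}), s({1, 3}, {1, 2, 3}), s({1, 2, 3}, {0, 1, 2, 3}), s({0, 1, 2, 3}, {0, 1, 2}), s({0, 1, 2}, {1, 2}), s({1, 2}, {2}), s({2}, {0, 2}), s({0, 2}, {0}), s({0}, {0, 1}), s({0, 1}, {1}), s({1}, ∅)] : List (Sym2 V4)) := by decide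

lemma hamEdges2 : ∀ e ∈ hamE2, e ∈ (hamW2).edges :=
  finsetBAll hamL2 (fun k => by rw [hamWedges2]; revert k; decide)

lemma ham2 : IsHamCycleSet (↑hamE2 : Set (Sym2 V4)) := by
  refine ⟨∅, hamW2, ?_, fun e he => hamEdges2 e he⟩
  exact (SimpleGraph.Walk.isHamiltonianCycle_iff_isCycle_and_support_count_tail_eq_one).mpr
    ⟨⟨⟨⟨by decide⟩, by simp [hamW2]⟩, by decide⟩, by decide⟩

lemma pos32 : IsHamCycleSet ((↑(F 3) : Set (Sym2 V4)) ∪ ↑(F 2)) := by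
  rw [← Finset.coe_union, hamEeq2]; exact ham2

lemma pos23 : IsHamCycleSet ((↑(F 2) : Set (Sym2 V4)) ∪ ↑(F 3)) := by
  rw [Set.union_comm, ← Finset.coe_union, hamEeq2]; exact ham2

def negP00 : List (V4 × V4) := [((∅ : V4), ({2} : V4)), (({0} : V4), ({0, 3} : V4)), (({1} : V4), ({1, 2} : V4)), (({0, 1} : V4), ({0, 1, 3} : V4)), (({0, 2} : V4), ({0, 1, 2} : V4)), (({3} : V4), ({1, 3} : V4)), (({2, 3} : V4), ({1, 2, 3} : V4)), (({0, 2, 3} : V4), ({0, 1, 2, 3} : V4))]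

def negE00 : Finset (Sym2 V4) := Finset.mk (↑(negP00.map fun p => s(p.1, p.2))) (by decide)

lemma negEeq00 : F 0 ∪ F 0 = negE00 := by decide

def negS00 : Finset V4 := Finset.mk (([∅, {2}] : List V4) : Multiset V4) (by decide)

lemma neg00 : ¬ IsHamCycleSet ((↑(F 0) : Set (Sym2 V4)) ∪ ↑(F 0)) := by
  rw [← Finset.coe_union, negEeq00]
  exact not_ham _ negS00 (clOf negP00 negS00 (by decide)) (∅) ({0})
    (by decide) (by decide)

def negP11 : List (V4 × V4) := [((∅ : V4), ({0} : V4)), (({1} : V4), ({1, 3} : V4)), (({0, 1} : V4), ({0, 1, 2} : V4)), (({2} : V4), ({2, 3} : V4)), (({0, 2} : V4), ({0, 2, 3} : V4)), (({1, 2} : V4), ({1, 2, 3} : V4)), (({3} : V4), ({0, 3} : V4)), (({0, 1, 3} : V4), ({0, 1, 2, 3} : V4))]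

def negE11 : Finset (Sym2 V4) := Finset.mk (↑(negP11.map fun p => s(p.1, p.2))) (by decide)

lemma negEeq11 : F 1 ∪ F 1 = negE11 := by decide

def negS11 : Finset V4 := Finset.mk (([∅, {0}] : List V4) : Multiset V4) (by decide)

lemma neg11 : ¬ IsHamCycleSet ((↑(F 1) : Set (Sym2 V4)) ∪ ↑(F 1)) := by
  rw [← Finset.coe_union, negEeq11]
  exact not_ham _ negS11 (clOf negP11 negS11 (by decide)) (∅) ({1})
    (by decide) (by decide)

def negP22 : List (V4 × V4) := [((∅ : V4), ({1} : V4)), (({0} : V4), ({0, 1} : V4)), (({2} : V4), ({0, 2} : V4)), (({1, 2} : V4), ({0, 1, 2} : V4)), (({3} : V4), ({2, 3} : V4)), (({0, 3} : V4), ({0, 2, 3} : V4)), (({1, 3} : V4), ({0, 1, 3} : V4)), (({1, 2, 3} : V4), ({0, 1, 2, 3} : V4))]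

def negE22 : Finset (Sym2 V4) := Finset.mk (↑(negP22.map fun p => s(p.1, p.2))) (by decide)

lemma negEeq22 : F 2 ∪ F 2 = negE22 := by decide

def negS22 : Finset V4 := Finset.mk (([∅, {1}] : List V4) : Multiset V4) (by decide)

lemma neg22 : ¬ IsHamCycleSet ((↑(F 2) : Set (Sym2 V4)) ∪ ↑(F 2)) := by
  rw [← Finset.coe_union, negEeq22]
  exact not_ham _ negS22 (clOf negP22 negS22 (by decide)) (∅) ({0})
    (by decide) (by decide)

def negP33 : List (V4 × V4) := [((∅ : V4), ({3} : V4)), (({0} : V4), ({0, 2} : V4)), (({1} : V4), ({0, 1} : V4)), (({2} : V4), ({1, 2} : V4)), (({0, 1, 2} : V4), ({0, 1, 2, 3} : V4)), (({0, 3} : V4), ({0, 1, 3} : V4)), (({1, 3} : V4), ({1, 2, 3} : V4)), (({2, 3} : V4), ({0, 2, 3} : V4))]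

def negE33 : Finset (Sym2 V4) := Finset.mk (↑(negP33.map fun p => s(p.1, p.2))) (by decide)

lemma negEeq33 : F 3 ∪ F 3 = negE33 := by decide

def negS33 : Finset V4 := Finset.mk (([∅, {3}] : List V4) : Multiset V4) (by decide)

lemma neg33 : ¬ IsHamCycleSet ((↑(F 3) : Set (Sym2 V4)) ∪ ↑(F 3)) := by
  rw [← Finset.coe_union, negEeq33]
  exact not_ham _ negS33 (clOf negP33 negS33 (by decide)) (∅) ({0})
    (by decide) (by decide)

def negP01 : List (V4 × V4) := [((∅ : V4), ({2} : V4)), (({0} : V4), ({0, 3} : V4)), (({1} : V4), ({1, 2} : V4)), (({0, 1} : V4), ({0, 1, 3} : V4)), (({0, 2} : V4), ({0, 1, 2} : V4)), (({3} : V4), ({1, 3} : V4)), (({2, 3} : V4), ({1, 2, 3} : V4)), (({0, 2, 3} : V4), ({0, 1, 2, 3} : V4)), ((∅ : V4), ({0} : V4)), (({1} : V4), ({1, 3} : V4)), (({0, 1} : V4), ({0, 1, 2} : V4)), (({2} : V4), ({2, 3} : V4)), (({0, 2} : V4), ({0, 2, 3} : V4)), (({1, 2} : V4), ({1, 2, 3}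 : V4)), (({3} : V4), ({0, 3} : V4)), (({0, 1, 3} : V4), ({0, 1, 2, 3} : V4))]

def negE01 : Finset (Sym2 V4) := Finset.mk (↑(negP01.map fun p => s(p.1, p.2))) (by decide)

lemma negEeq01 : F 0 ∪ F 1 = negE01 := by decide

def negS01 : Finset V4 := Finset.mk (([∅, {0}, {1}, {2}, {1, 2}, {3}, {0, 3}, {1, 3}, {2, 3}, {1, 2, 3}] : List V4) : Multiset V4) (by decide)

lemma neg01 : ¬ IsHamCycleSet ((↑(F 0) : Set (Sym2 V4)) ∪ ↑(F 1)) := by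
  rw [← Finset.coe_union, negEeq01]
  exact not_ham _ negS01 (clOf negP01 negS01 (by decide)) (∅) ({0, 1})
    (by decide) (by decide)

lemma neg10 : ¬ IsHamCycleSet ((↑(F 1) : Set (Sym2 V4)) ∪ ↑(F 0)) := by
  rw [Set.union_comm]; exact neg01

def negP02 : List (V4 × V4) := [((∅ : V4), ({2} : V4)), (({0} : V4), ({0, 3} : V4)), (({1} : V4), ({1, 2} : V4)), (({0, 1} : V4), ({0, 1, 3} : V4)), (({0, 2} : V4), ({0, 1, 2} : V4)), (({3} : V4), ({1, 3} : V4)), (({2, 3} : V4), ({1, 2, 3} : V4)), (({0, 2, 3} : V4), ({0, 1, 2, 3} : V4)), ((∅ : V4), ({1} : V4)), (({0} : V4), ({0, 1} : V4)), (({2} : V4), ({0, 2} : V4)), (({1, 2} : V4), ({0, 1, 2} : V4)), (({3} : V4), ({2, 3} : V4)), (({0, 3} : V4), ({0, 2, 3} : V4)), (({1, 3} : V4), ({0, 1, 3} : V4)), (({1, 2, 3} : V4), ({0, 1, 2, 3} : V4))]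

def negE02 : Finset (Sym2 V4) := Finset.mk (↑(negP02.map fun p => s(p.1, p.2))) (by decide)

lemma negEeq02 : F 0 ∪ F 2 = negE02 := by decide

def negS02 : Finset V4 := Finset.mk (([∅, {1}, {2}, {0, 2}, {1, 2}, {0, 1, 2}] : List V4) : Multiset V4) (by decide)

lemma neg02 : ¬ IsHamCycleSet ((↑(F 0) : Set (Sym2 V4)) ∪ ↑(F 2)) := by
  rw [← Finset.coe_union, negEeq02]
  exact not_ham _ negS02 (clOf negP02 negS02 (by decide)) (∅) ({0})
    (by decide) (by decide)

lemma neg20 : ¬ IsHamCycleSet ((↑(F 2) : Set (Sym2 V4)) ∪ ↑(F 0)) := by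
  rw [Set.union_comm]; exact neg02

def negP12 : List (V4 × V4) := [((∅ : V4), ({0} : V4)), (({1} : V4), ({1, 3} : V4)), (({0, 1} : V4), ({0, 1, 2} : V4)), (({2} : V4), ({2, 3} : V4)), (({0, 2} : V4), ({0, 2, 3} : V4)), (({1, 2} : V4), ({1, 2, 3} : V4)), (({3} : V4), ({0, 3} : V4)), (({0, 1, 3} : V4), ({0, 1, 2, 3} : V4)), ((∅ : V4), ({1} : V4)), (({0} : V4), ({0, 1} : V4)), (({2} : V4), ({0, 2} : V4)), (({1, 2} : V4), ({0, 1, 2} : V4)), (({3} : V4), ({2, 3} : V4)), (({0, 3} : V4), ({0, 2, 3} : V4)), (({1, 3} : V4), ({0, 1, 3} : V4)), (({1, 2, 3} : V4), ({0, 1, 2, 3} : V4))]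

def negE12 : Finset (Sym2 V4) := Finset.mk (↑(negP12.map fun p => s(p.1, p.2))) (by decide)

lemma negEeq12 : F 1 ∪ F 2 = negE12 := by decide

def negS12 : Finset V4 := Finset.mk (([∅, {0}, {1}, {0, 1}, {1, 2}, {0, 1, 2}, {1, 3}, {0, 1, 3}, {1, 2, 3}, {0, 1, 2, 3}] : List V4) : Multiset V4) (by decide)

lemma neg12 : ¬ IsHamCycleSet ((↑(F 1) : Set (Sym2 V4)) ∪ ↑(F 2)) := by
  rw [← Finset.coe_union, negEeq12]
  exact not_ham _ negS12 (clOf negP12 negS12 (by decide)) (∅) ({2})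
    (by decide) (by decide)

lemma neg21 : ¬ IsHamCycleSet ((↑(F 2) : Set (Sym2 V4)) ∪ ↑(F 1)) := by
  rw [Set.union_comm]; exact neg12

/-- There is a 1-factorization `M₁, M₂, M₃, M₄` of `Q₄` such that `M₄ ∪ M_i` is a
Hamilton cycle for `i = 1, 2, 3` while `M_i ∪ M_j` is not a Hamilton cycle for distinct
`i, j ∈ {1, 2, 3}`; i.e. `G[M]` is isomorphic to `K_{3,1}`. -/
theorem statement7 :
    ∃ M : Fin 4 → Set (Sym2 (Finset (Fin 4))),
      IsFactorization (cube 4) M ∧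
      ∀ i j : Fin 4,
        (IsHamCycleSet (M i ∪ M j) ↔ Xor' ((i : ℕ) < 3) ((j : ℕ) < 3)) := by
  refine ⟨fun i => ↑(F i), ⟨fun i => ⟨Fsub i, Funiq i⟩,
    fun i j hij => (Finset.disjoint_coe).mpr (Fdisj i j hij), Funion⟩, ?_⟩
  intro i j
  fin_cases i <;> fin_cases j

  · exact iff_of_false neg00 (by unfold Xor'; decide)
  · exact iff_of_false neg01 (by unfold Xor'; decide)
  · exact iff_of_false neg02 (by unfold Xor'; decide)
  · exact iff_of_true pos03 (by unfold Xor'; decide)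
  · exact iff_of_false neg10 (by unfold Xor'; decide)
  · exact iff_of_false neg11 (by unfold Xor'; decide)
  · exact iff_of_false neg12 (by unfold Xor'; decide)
  · exact iff_of_true pos13 (by unfold Xor'; decide)
  · exact iff_of_false neg20 (by unfold Xor'; decide)
  · exact iff_of_false neg21 (by unfold Xor'; decide)
  · exact iff_of_false neg22 (by unfold Xor'; decide)
  · exact iff_of_true pos23 (by unfold Xor'; decide)
  · exact iff_of_true pos30 (by unfold Xor'; decide)
  · exact iff_of_true pos31 (by unfold Xor'; decide)
  · exact iff_of_true pos32 (by unfold Xor'; decide)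
  · exact iff_of_false neg33 (by unfold Xor'; decide)
end

section
/- There is no direction respecting 1-factorization M_1, M_2, M_3, M_4 of the hypercube Q_4 (with respect to the split into directions {1,2,3} and {4}) such that M_i ∪ M_4 is a Hamilton cycle for every i ∈ {1, 2, 3}. -/
open SimpleGraph

/-- The directional matching `D_i` of `Q_d`: all edges in direction `i`, i.e. whose
endpoints differ exactly in the element `i`. -/
def dirMatching (d : ℕ) (i : Fin d) : Set (Sym2 (Finset (Fin d))) :=
  {e | ∃ u v : Finset (Fin d), e = s(u, v) ∧ symmDiff u v = {i}}

/-- The edge set `M` only uses edges in directions belonging to `S`. -/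
def UsesDirections {d : ℕ} (M : Set (Sym2 (Finset (Fin d)))) (S : Set (Fin d)) : Prop :=
  ∀ u v : Finset (Fin d), s(u, v) ∈ M → ∀ i ∈ symmDiff u v, i ∈ S

/-- A 1-factorization of `Q_{k+l}` is direction respecting (w.r.t. the split `k + l`)
if the first `k` matchings use only the first `k` directions and the last `l` matchings
use only the last `l` directions. -/
def DirectionRespecting (k l : ℕ) (M : Fin (k + l) → Set (Sym2 (Finset (Fin (k + l))))) : Prop :=
  ∀ i : Fin (k + l), UsesDirections (M i) {j : Fin (k + l) | ((j : ℕ) < k ↔ (i : ℕ) < k)}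


def enc4 (u : V4) : Fin 8 :=
  ⟨(if (0:Fin 4) ∈ u then 1 else 0) + (if (1:Fin 4) ∈ u then 2 else 0) +
    (if (2:Fin 4) ∈ u then 4 else 0), by split_ifs <;> norm_num⟩

def dec4 (x : Fin 8) (b : Bool) : V4 :=
  Finset.filter (fun j : Fin 4 => if (j:ℕ) < 3 then x.val.testBit (j:ℕ) else b) Finset.univ

def mkU (b0 b1 b2 b3 : Bool) : V4 :=
  Finset.filter (fun j : Fin 4 => if j = 0 then b0 else if j = 1 then b1
    else if j = 2 then b2 else b3) Finset.univ

lemma recon (u : V4) : u = mkU (decide ((0:Fin 4) ∈ u)) (decide ((1:Fin 4) ∈ u))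
    (decide ((2:Fin 4) ∈ u)) (decide ((3:Fin 4) ∈ u)) := by
  ext j
  fin_cases j <;> simp [mkU]

lemma exists_mk (u : V4) : ∃ b0 b1 b2 b3, u = mkU b0 b1 b2 b3 :=
  ⟨_, _, _, _, recon u⟩


abbrev PM8 := Fin 8 → Fin 3

def xor3 (x : Fin 8) (d : Fin 3) : Fin 8 :=
  ⟨x.val ^^^ (1 <<< d.val), by
    have h1 : x.val < 2^3 := x.isLt
    have h2 : 1 <<< d.val < 2^3 := by
      have := d.isLt
      interval_cases h : d.val <;> simp
    exact Nat.xor_lt_two_pow h1 h2⟩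

def Compat8 (g : PM8) : Prop := ∀ x, g (xor3 x (g x)) = g x
instance (g : PM8) : Decidable (Compat8 g) := by unfold Compat8; infer_instance

def mk8 (a b c d e f p q : Fin 3) : PM8 := fun x =>
  if x.val = 0 then a else if x.val = 1 then b else if x.val = 2 then c
  else if x.val = 3 then d else if x.val = 4 then e else if x.val = 5 then f
  else if x.val = 6 then p else q

def L9 : List PM8 :=
  [mk8 0 0 0 0 0 0 0 0, mk8 0 0 0 0 1 1 1 1, mk8 0 0 2 2 0 0 2 2,
   mk8 1 1 1 1 0 0 0 0, mk8 1 1 1 1 1 1 1 1, mk8 1 2 1 2 1 2 1 2,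
   mk8 2 1 2 1 2 1 2 1, mk8 2 2 0 0 2 2 0 0, mk8 2 2 2 2 2 2 2 2]

def DirP (g : PM8) : Prop := ∀ x, g x = g 0
instance (g : PM8) : Decidable (DirP g) := by unfold DirP; infer_instance

/-- vertex of the model: element of bottom (b=false) / top (b=true) cube -/
abbrev V16 := Fin 8 × Bool

def toIdx (z : V16) : ℕ := z.1.val + (if z.2 then 8 else 0)

def fromIdx (i : ℕ) : V16 := (⟨i % 8, Nat.mod_lt _ (by norm_num)⟩, decide (8 ≤ i))

/-- the two neighbors of a vertex, as a bitmask -/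
def nbrs (g h : PM8) (z : V16) : ℕ :=
  (1 <<< toIdx (xor3 z.1 ((if z.2 then h else g) z.1), z.2)) ||| (1 <<< toIdx (z.1, !z.2))

def stepSet (g h : PM8) (R : ℕ) : ℕ :=
  R ||| (List.range 16).foldr
    (fun i acc => (if R.testBit i then nbrs g h (fromIdx i) else 0) ||| acc) 0

def reachB (g h : PM8) : ℕ → ℕ
  | 0 => 1
  | n+1 => stepSet g h (reachB g h n)

set_option maxRecDepth 40000 in
theorem classify : ∀ a b c d e f p q : Fin 3,
    Compat8 (mk8 a b c d e f p q) → mk8 a b c d e f p q ∈ L9 := by decide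

set_option maxRecDepth 40000 in
theorem pairLemma : (L9.all fun g => L9.all fun h =>
    !((List.range 16).all (reachB g h 16).testBit) ||
      (decide (DirP g) == !decide (DirP h))) = true := by decide

set_option maxRecDepth 40000 in
theorem tripleLemma : (L9.all fun g => L9.all fun h => L9.all fun k =>
    !(decide (∀ x, g x ≠ h x ∧ g x ≠ k x ∧ h x ≠ k x)) ||
      ((decide (DirP g)).xor ((decide (DirP h)).xor (decide (DirP k))) == true)) = true := by
  decide

def F4 (u : V4) : V16 := (enc4 u, decide ((3:Fin 4) ∈ u))

lemma B1' : ∀ b0 b1 b2 b3 (d : Fin 3),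
    F4 (symmDiff (mkU b0 b1 b2 b3) {d.castSucc}) =
      (xor3 (enc4 (mkU b0 b1 b2 b3)) d, decide ((3:Fin 4) ∈ mkU b0 b1 b2 b3)) := by decide

lemma B1 (u : V4) (d : Fin 3) :
    F4 (symmDiff u {d.castSucc}) = (xor3 (enc4 u) d, decide ((3:Fin 4) ∈ u)) := by
  obtain ⟨b0, b1, b2, b3, rfl⟩ := exists_mk u
  exact B1' b0 b1 b2 b3 d

lemma B2' : ∀ b0 b1 b2 b3,
    F4 (symmDiff (mkU b0 b1 b2 b3) {(3:Fin 4)}) =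
      (enc4 (mkU b0 b1 b2 b3), !decide ((3:Fin 4) ∈ mkU b0 b1 b2 b3)) := by decide

lemma B2 (u : V4) : F4 (symmDiff u {(3:Fin 4)}) = (enc4 u, !decide ((3:Fin 4) ∈ u)) := by
  obtain ⟨b0, b1, b2, b3, rfl⟩ := exists_mk u
  exact B2' b0 b1 b2 b3

lemma B4' : ∀ b0 b1 b2 b3,
    dec4 (enc4 (mkU b0 b1 b2 b3)) (decide ((3:Fin 4) ∈ mkU b0 b1 b2 b3)) = mkU b0 b1 b2 b3 := by
  decide

lemma B4 (u : V4) : dec4 (enc4 u) (decide ((3:Fin 4) ∈ u)) = u := by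
  obtain ⟨b0, b1, b2, b3, rfl⟩ := exists_mk u
  exact B4' b0 b1 b2 b3

lemma B5 : ∀ z : V16, F4 (dec4 z.1 z.2) = z := by decide

lemma F4_empty : F4 (∅ : V4) = (0, false) := by decide

lemma toIdx_lt (z : V16) : toIdx z < 16 := by
  rcases z with ⟨x, b⟩
  have := x.isLt
  cases b <;> simp [toIdx] <;> omega

lemma fromIdx_toIdx : ∀ z : V16, fromIdx (toIdx z) = z := by decide

lemma toIdx_fromIdx {j : ℕ} (hj : j < 16) : toIdx (fromIdx j) = j := by
  by_cases h8 : 8 ≤ j <;>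
    simp [toIdx, fromIdx, h8] <;> omega

lemma testBit_one_shiftLeft (a j : ℕ) : (1 <<< a).testBit j = decide (j = a) := by
  rw [Nat.shiftLeft_eq, one_mul]
  rcases eq_or_ne j a with rfl | h
  · simp [Nat.testBit_two_pow_self]
  · simp [Nat.testBit_two_pow_of_ne (Ne.symm h), h]

lemma nbrs_bit1 (g h : PM8) (z : V16) :
    (nbrs g h z).testBit (toIdx (xor3 z.1 ((if z.2 then h else g) z.1), z.2)) = true := by
  simp [nbrs, Nat.testBit_or, testBit_one_shiftLeft]

lemma nbrs_bit2 (g h : PM8) (z : V16) :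
    (nbrs g h z).testBit (toIdx (z.1, !z.2)) = true := by
  simp [nbrs, Nat.testBit_or, testBit_one_shiftLeft]

lemma foldr_bit (g h : PM8) (R : ℕ) (j : ℕ) : ∀ l : List ℕ,
    (∃ i ∈ l, R.testBit i = true ∧ (nbrs g h (fromIdx i)).testBit j = true) →
    ((l.foldr (fun i acc => (if R.testBit i then nbrs g h (fromIdx i) else 0) ||| acc) 0).testBit j
      = true) := by
  intro l
  induction l with
  | nil => rintro ⟨i, hi, _⟩; cases hi
  | cons a l ih =>
    rintro ⟨i, hi, hR, hn⟩
    rw [List.foldr_cons, Nat.testBit_or]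
    rcases List.mem_cons.mp hi with rfl | hil
    · rw [if_pos hR]
      simp [hn]
    · simp [ih ⟨i, hil, hR, hn⟩]

lemma stepSet_bit {g h : PM8} {R : ℕ} {z : V16} {j : ℕ}
    (hz : R.testBit (toIdx z) = true) (hn : (nbrs g h z).testBit j = true) :
    (stepSet g h R).testBit j = true := by
  rw [stepSet, Nat.testBit_or]
  have := foldr_bit g h R j (List.range 16)
    ⟨toIdx z, List.mem_range.mpr (toIdx_lt z), by rw [fromIdx_toIdx]; exact ⟨hz, hn⟩⟩
  simp [this]

lemma stepSet_mono {g h : PM8} {R : ℕ} {j : ℕ} (hj : R.testBit j = true) :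
    (stepSet g h R).testBit j = true := by
  rw [stepSet, Nat.testBit_or, hj]
  rfl

lemma reachB_mono {g h : PM8} {j : ℕ} {m n : ℕ} (hmn : m ≤ n)
    (hj : (reachB g h m).testBit j = true) : (reachB g h n).testBit j = true := by
  induction n with
  | zero => exact Nat.le_zero.mp hmn ▸ hj
  | succ n ih =>
    rcases Nat.lt_or_ge m (n+1) with hlt | hge
    · exact stepSet_mono (ih (by omega))
    · have : m = n + 1 := by omega
      exact this ▸ hj

lemma eta8 (g : PM8) : g = mk8 (g 0) (g 1) (g 2) (g 3) (g 4) (g 5) (g 6) (g 7) := by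
  funext x; fin_cases x <;> rfl

lemma mem_L9 {g : PM8} (hg : Compat8 g) : g ∈ L9 := by
  rw [eta8 g]
  exact classify _ _ _ _ _ _ _ _ (by rw [← eta8 g]; exact hg)



lemma key {M : Fin (3+1) → Set (Sym2 (Finset (Fin (3+1))))}
    (hPM : ∀ i, IsPM (cube (3+1)) (M i)) (hdir : DirectionRespecting 3 1 M)
    (i : Fin (3+1)) (hi : (i:ℕ) < 3) (v : V4) :
    ∃ d : Fin 3, s(v, symmDiff v {d.castSucc}) ∈ M i ∧
      ∀ w, s(v, w) ∈ M i → w = symmDiff v {d.castSucc} := by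
  obtain ⟨e, ⟨heM, hve⟩, huniq⟩ := (hPM i).2 v
  obtain ⟨w, rfl⟩ := Sym2.mem_iff_exists.mp hve
  have hadj : (cube (3+1)).Adj v w := (hPM i).1 heM
  have hcard : (symmDiff v w).card = 1 := hadj
  obtain ⟨d4, hd4⟩ := Finset.card_eq_one.mp hcard
  have hmemd : d4 ∈ symmDiff v w := hd4 ▸ Finset.mem_singleton_self d4
  have hdird := hdir i v w heM d4 hmemd
  have hd3 : (d4:ℕ) < 3 := by
    simp only [Set.mem_setOf_eq, hi, iff_true] at hdird
    exact hdird
  have hw : w = symmDiff v {d4} := by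
    rw [← hd4, symmDiff_symmDiff_cancel_left]
  have hcast : (Fin.castSucc ⟨(d4:ℕ), hd3⟩ : Fin (3+1)) = d4 := by
    apply Fin.ext; rfl
  refine ⟨⟨(d4:ℕ), hd3⟩, ?_, ?_⟩
  · rw [hcast, ← hw]; exact heM
  · intro w' hw'
    have heq := huniq s(v, w') ⟨hw', Sym2.mem_mk_left v w'⟩
    rw [Sym2.eq_iff] at heq
    rcases heq with ⟨-, rfl⟩ | ⟨rfl, rfl⟩
    · rw [hcast, ← hw]
    · exact absurd rfl hadj.ne

lemma key3 {M : Fin (3+1) → Set (Sym2 (Finset (Fin (3+1))))}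
    (hPM : ∀ i, IsPM (cube (3+1)) (M i)) (hdir : DirectionRespecting 3 1 M)
    {u w : V4} (hmem : s(u, w) ∈ M 3) : w = symmDiff u {(3 : Fin (3+1))} := by
  have hadj : (cube (3+1)).Adj u w := (hPM 3).1 hmem
  have hcard : (symmDiff u w).card = 1 := hadj
  obtain ⟨d4, hd4⟩ := Finset.card_eq_one.mp hcard
  have hmemd : d4 ∈ symmDiff u w := hd4 ▸ Finset.mem_singleton_self d4
  have hdird := hdir 3 u w hmem d4 hmemd
  have hd3 : ¬ (d4:ℕ) < 3 := by
    simp only [Set.mem_setOf_eq] at hdird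
    intro hlt
    exact absurd (hdird.mp hlt) (by decide)
  have : d4 = (3 : Fin (3+1)) := by
    apply Fin.ext
    have h4 := d4.isLt
    have h3 : ((3 : Fin (3+1)) : ℕ) = 3 := rfl
    omega
  rw [← this, ← hd4, symmDiff_symmDiff_cancel_left]

/-- There is no direction respecting 1-factorization `M₁, M₂, M₃, M₄` of `Q₄` (w.r.t.
the split `3 + 1`) such that `M_i ∪ M₄` is a Hamilton cycle for all `i ∈ {1,2,3}`. -/
theorem statement11 :
    ¬ ∃ M : Fin (3 + 1) → Set (Sym2 (Finset (Fin (3 + 1)))),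
        IsFactorization (cube (3 + 1)) M ∧ DirectionRespecting 3 1 M ∧
        ∀ i : Fin (3 + 1), (i : ℕ) < 3 → IsHamCycleSet (M i ∪ M 3) := by
  rintro ⟨M, ⟨hPM, hdisj, -⟩, hdir, hham⟩
  choose Ψ hΨe hΨu using key hPM hdir
  -- compatibility of the direction functions
  have hcompat : ∀ i hi v, Ψ i hi (symmDiff v {(Ψ i hi v).castSucc}) = Ψ i hi v := by
    intro i hi v
    have h1 : s(symmDiff v {(Ψ i hi v).castSucc}, v) ∈ M i := Sym2.eq_swap ▸ hΨe i hi v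
    have h2 := hΨu i hi (symmDiff v {(Ψ i hi v).castSucc}) v h1
    have h3 : symmDiff (symmDiff v {(Ψ i hi v).castSucc}) {(Ψ i hi v).castSucc} = v :=
      symmDiff_symmDiff_cancel_right _ _
    have h4 := h2.symm.trans h3.symm
    have h5 := symmDiff_right_injective _ h4
    have h6 := Finset.singleton_injective h5
    exact Fin.castSucc_injective _ h6
  have hdistinct : ∀ (i j : Fin (3+1)) hi hj, i ≠ j → ∀ v, Ψ i hi v ≠ Ψ j hj v := by
    intro i j hi hj hij v heq
    have h1 := hΨe i hi v
    have h2 := hΨe j hj v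
    rw [heq] at h1
    exact Set.disjoint_left.mp (hdisj i j hij) h1 h2
  -- model functions
  set γ := fun (i : Fin (3+1)) (hi : (i:ℕ) < 3) (b : Bool) => (fun x => Ψ i hi (dec4 x b) : PM8)
    with hγdef
  have hγ_at : ∀ i hi b (u : V4), decide ((3:Fin 4) ∈ u) = b → γ i hi b (enc4 u) = Ψ i hi u := by
    intro i hi b u hb
    show Ψ i hi (dec4 (enc4 u) b) = Ψ i hi u
    rw [← hb, B4]
  have hγcompat : ∀ i hi b, Compat8 (γ i hi b) := by
    intro i hi b x
    have hFu : F4 (dec4 x b) = (x, b) := B5 (x, b)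
    have henc : enc4 (dec4 x b) = x := congrArg Prod.fst hFu
    have h3u : decide ((3:Fin 4) ∈ dec4 x b) = b := congrArg Prod.snd hFu
    have hγx : γ i hi b x = Ψ i hi (dec4 x b) := by
      conv_lhs => rw [← henc]
      exact hγ_at i hi b (dec4 x b) h3u
    set d := Ψ i hi (dec4 x b) with hd
    have hFw := B1 (dec4 x b) d
    rw [henc, h3u] at hFw
    have henc2 : enc4 (symmDiff (dec4 x b) {d.castSucc}) = xor3 x d := congrArg Prod.fst hFw
    have h3u2 : decide ((3:Fin 4) ∈ symmDiff (dec4 x b) {d.castSucc}) = b :=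
      congrArg Prod.snd hFw
    calc γ i hi b (xor3 x (γ i hi b x)) = γ i hi b (xor3 x d) := by rw [hγx]
      _ = Ψ i hi (symmDiff (dec4 x b) {d.castSucc}) := by
          conv_lhs => rw [← henc2]
          exact hγ_at i hi b (symmDiff (dec4 x b) {d.castSucc}) h3u2
      _ = Ψ i hi (dec4 x b) := hcompat i hi (dec4 x b)
      _ = γ i hi b x := hγx.symm
  have hγmem : ∀ i hi b, γ i hi b ∈ L9 := fun i hi b => mem_L9 (hγcompat i hi b)
  -- connectivity from the Hamiltonian cycles
  have hconn : ∀ i hi,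
      ((List.range 16).all (reachB (γ i hi false) (γ i hi true) 16).testBit) = true := by
    intro i hi
    obtain ⟨v0, w, hHC, -⟩ := hham i hi
    have hne : (∅ : V4) ∈ w.support := hHC.mem_support ∅
    set w' := w.rotate ∅ hne with hw'
    have hlenw : w.length = 16 := by
      rw [hHC.length_eq]
      simp [Fintype.card_finset]
    have hlen : w'.length = 16 := by
      have hspec := congrArg Walk.length (w.take_spec hne)
      rw [Walk.length_append] at hspec
      rw [hw', Walk.rotate, Walk.length_append]
      omega
    have hsupp : ∀ x : V4, x ∈ w'.support := by
      intro x
      have h1 : x ∈ w.support.tail := by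
        have h2 := hHC.isHamiltonian_tail.mem_support x
        rwa [Walk.support_tail_of_not_nil w hHC.toIsCycle.not_nil] at h2
      have h3 := Walk.support_rotate w ∅ hne
      exact List.mem_of_mem_tail (h3.mem_iff.mpr h1)
    have hadjT : ∀ u v : V4, (fromEdgeSet (M i ∪ M 3)).Adj u v →
        (nbrs (γ i hi false) (γ i hi true) (F4 u)).testBit (toIdx (F4 v)) = true := by
      intro u v huv
      rw [fromEdgeSet_adj] at huv
      obtain ⟨hmem, -⟩ := huv
      rcases hmem with hMi | hM3
      · have hv : v = symmDiff u {(Ψ i hi u).castSucc} := hΨu i hi u v hMi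
        have hFv : F4 v = (xor3 (enc4 u) (Ψ i hi u), decide ((3:Fin 4) ∈ u)) := by
          rw [hv]; exact B1 u _
        have hΨγ : Ψ i hi u =
            (if decide ((3:Fin 4) ∈ u) then γ i hi true else γ i hi false) (enc4 u) := by
          cases hq : decide ((3:Fin 4) ∈ u) with
          | false => exact (hγ_at i hi false u hq).symm
          | true => exact (hγ_at i hi true u hq).symm
        rw [hFv, hΨγ]
        exact nbrs_bit1 _ _ (F4 u)
      · have hv : v = symmDiff u {(3 : Fin (3+1))} := key3 hPM hdir hM3
        have hFv : F4 v = ((F4 u).1, !(F4 u).2) := by rw [hv]; exact B2 u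
        rw [hFv]
        exact nbrs_bit2 _ _ (F4 u)
    have hstep : ∀ k,
        (reachB (γ i hi false) (γ i hi true) k).testBit (toIdx (F4 (w'.getVert k))) = true := by
      intro k
      induction k with
      | zero =>
        rw [Walk.getVert_zero, F4_empty]
        simp only [reachB]
        decide
      | succ k ih =>
        rcases Nat.lt_or_ge k w'.length with hk | hk
        · exact stepSet_bit ih (hadjT _ _ (w'.adj_getVert_succ hk))
        · rw [w'.getVert_of_length_le hk] at ih
          rw [w'.getVert_of_length_le (le_trans hk (Nat.le_succ k))]
          exact stepSet_mono ih
    rw [List.all_eq_true]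
    intro j hj
    have hj16 : j < 16 := List.mem_range.mp hj
    have hz : F4 (dec4 (fromIdx j).1 (fromIdx j).2) = fromIdx j := B5 (fromIdx j)
    obtain ⟨k, hk, hklen⟩ :=
      Walk.mem_support_iff_exists_getVert.mp (hsupp (dec4 (fromIdx j).1 (fromIdx j).2))
    have hbit := hstep k
    rw [hk, hz, toIdx_fromIdx hj16] at hbit
    exact reachB_mono (by omega) hbit
  -- endgame: parity of directional matchings
  have hpair : ∀ i hi, decide (DirP (γ i hi false)) = !decide (DirP (γ i hi true)) := by
    intro i hi
    have hall := pairLemma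
    rw [List.all_eq_true] at hall
    have h1 := hall _ (hγmem i hi false)
    rw [List.all_eq_true] at h1
    have h2 := h1 _ (hγmem i hi true)
    rw [hconn i hi] at h2
    simpa using h2
  have htriple : ∀ b : Bool,
      ((decide (DirP (γ 0 (by decide) b))).xor ((decide (DirP (γ 1 (by decide) b))).xor
        (decide (DirP (γ 2 (by decide) b))))) = true := by
    intro b
    have hall := tripleLemma
    rw [List.all_eq_true] at hall
    have h1 := hall _ (hγmem 0 (by decide) b)
    rw [List.all_eq_true] at h1
    have h2 := h1 _ (hγmem 1 (by decide) b)
    rw [List.all_eq_true] at h2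
    have h3 := h2 _ (hγmem 2 (by decide) b)
    have hd : decide (∀ x, γ 0 (by decide) b x ≠ γ 1 (by decide) b x ∧
        γ 0 (by decide) b x ≠ γ 2 (by decide) b x ∧
        γ 1 (by decide) b x ≠ γ 2 (by decide) b x) = true := by
      rw [decide_eq_true_iff]
      intro x
      exact ⟨hdistinct 0 1 (by decide) (by decide) (by decide) _,
        hdistinct 0 2 (by decide) (by decide) (by decide) _,
        hdistinct 1 2 (by decide) (by decide) (by decide) _⟩
    rw [hd] at h3
    simpa using h3
  have hb := htriple false
  have ht := htriple true
  rw [hpair 0 (by decide), hpair 1 (by decide), hpair 2 (by decide)] at hb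
  revert hb ht
  cases decide (DirP (γ 0 (by decide) true)) <;>
    cases decide (DirP (γ 1 (by decide) true)) <;>
    cases decide (DirP (γ 2 (by decide) true)) <;> simp
end

section
/- The hypercube Q_3 has exactly four partitions of its edge set into perfect matchings (counted as unordered sets of matchings): one consists of the three directional matchings, and each of the other three contains exactly one directional matching. -/
open SimpleGraph

/-- An unordered 1-factorization of `G`: a collection of perfect matchings which
partitions the edge set of `G`. -/
def IsUnorderedFactorization {V : Type*} (G : SimpleGraph V) (F : Set (Set (Sym2 V))) : Prop :=
  (∀ M ∈ F, IsPM G M) ∧ (∀ M ∈ F, ∀ N ∈ F, M ≠ N → Disjoint M N) ∧ ⋃₀ F = G.edgeSet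

namespace S17
abbrev V3 := Finset (Fin 3)
abbrev E3 := Sym2 V3
instance : DecidableRel (cube 3).Adj := fun u v =>
  inferInstanceAs (Decidable ((symmDiff u v).card = 1))
def edges3 : Finset E3 := (cube 3).edgeFinset
def eV : Fin 8 → V3 := ![∅, {0}, {1}, {0,1}, {2}, {0,2}, {1,2}, {0,1,2}]
def eE : Fin 12 → E3 :=
  ![s(eV 0, eV 1), s(eV 2, eV 3), s(eV 4, eV 5), s(eV 6, eV 7),
    s(eV 0, eV 2), s(eV 1, eV 3), s(eV 4, eV 6), s(eV 5, eV 7),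
    s(eV 0, eV 4), s(eV 1, eV 5), s(eV 2, eV 6), s(eV 3, eV 7)]
def inc : ℕ → ℕ := fun v => [273,545,1042,2082,324,644,1096,2184].getD v 0
def Mk : ℕ → ℕ := fun i => [15,60,195,240,778,1440,2640,3077,3840].getD i 0
def dec (n : ℕ) : Finset E3 := (Finset.univ.filter fun j : Fin 12 => n.testBit j).image eE
def mf (i : Fin 9) : Finset E3 := dec (Mk i)

theorem d1 : edges3 = Finset.univ.image eE := by decide
theorem d2 : Function.Injective eE := by decide
theorem d3 : ∀ (v : Fin 8) (j : Fin 12), ((inc v).testBit j = true ↔ eV v ∈ eE j) := by decide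
theorem d4 : ∀ (i : Fin 9) (j : Fin 12), ((Mk i).testBit j = true ↔ eE j ∈ mf i) := by decide
theorem d5 : ∀ i j : Fin 9, (Mk i &&& Mk j = 0 ↔ Disjoint (mf i) (mf j)) := by decide
theorem d6 : ∀ i j : Fin 9, i ≠ j → mf i ≠ mf j := by decide
theorem d7 : ∀ i : Fin 9, mf i ⊆ edges3 := by decide
theorem d8 : ∀ (i : Fin 9) (v : V3), ∃ e ∈ mf i, v ∈ e ∧ ∀ e' ∈ mf i, v ∈ e' → e' = e := by decide

theorem d10a : ∀ e : E3, (∃ u v : V3, e = s(u,v) ∧ symmDiff u v = {(0 : Fin 3)}) ↔ e ∈ mf 0 := by decide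
theorem d10b : ∀ e : E3, (∃ u v : V3, e = s(u,v) ∧ symmDiff u v = {(1 : Fin 3)}) ↔ e ∈ mf 3 := by decide
theorem d10c : ∀ e : E3, (∃ u v : V3, e = s(u,v) ∧ symmDiff u v = {(2 : Fin 3)}) ↔ e ∈ mf 8 := by decide
theorem d11a : ∀ e : E3, e ∈ edges3 ↔ (e ∈ mf 0 ∨ e ∈ mf 5 ∨ e ∈ mf 6) := by decide
theorem d11b : ∀ e : E3, e ∈ edges3 ↔ (e ∈ mf 3 ∨ e ∈ mf 4 ∨ e ∈ mf 7) := by decide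
theorem d11c : ∀ e : E3, e ∈ edges3 ↔ (e ∈ mf 1 ∨ e ∈ mf 2 ∨ e ∈ mf 8) := by decide
theorem d11d : ∀ e : E3, e ∈ edges3 ↔ (e ∈ mf 0 ∨ e ∈ mf 3 ∨ e ∈ mf 8) := by decide

def pmMask (m : ℕ) : Bool := (List.range 8).all fun v =>
  (m &&& inc v) != 0 && ((m &&& inc v) &&& ((m &&& inc v)-1)) == 0
def disjB (s : ℕ) : Bool := (List.range 9).all fun i => (List.range 9).all fun j =>
  !(s.testBit i && s.testBit j && i != j) || (Mk i &&& Mk j == 0)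
def covB (s : ℕ) : Bool := (List.range 12).all fun j =>
  (List.range 9).any fun i => s.testBit i && (Mk i).testBit j
set_option maxRecDepth 10000 in
theorem N1 : (List.range 4096).filter pmMask = [15,60,195,240,778,1440,2640,3077,3840] := by decide
set_option maxRecDepth 10000 in
theorem N2 : ((List.range 512).all fun s =>
    !(disjB s && covB s) || ([97,152,262,265] : List ℕ).contains s) = true := by decide

/-! bit mask machinery -/

def lmask : List ℕ → ℕ
  | [] => 0
  | j :: l => (2^j) ||| lmask l

theorem testBit_lmask (l : List ℕ) (k : ℕ) : (lmask l).testBit k = true ↔ k ∈ l := by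
  induction l with
  | nil => simp [lmask]
  | cons j l ih =>
      rw [lmask, Nat.testBit_or, Bool.or_eq_true, ih, Nat.testBit_two_pow, List.mem_cons]
      simp [eq_comm]

theorem lmask_lt (l : List ℕ) (w : ℕ) (h : ∀ j ∈ l, j < w) : lmask l < 2^w := by
  apply Nat.lt_pow_two_of_testBit
  intro i hi
  rw [← Bool.not_eq_true, testBit_lmask]
  intro hmem
  exact absurd (h i hmem) (by omega)

open scoped Classical in
/-- mask of a predicate on `Fin w` -/
noncomputable def maskP {w : ℕ} (p : Fin w → Prop) : ℕ :=
  lmask (((List.finRange w).filter fun j => decide (p j)).map Fin.val)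

theorem maskP_lt {w : ℕ} (p : Fin w → Prop) : maskP p < 2^w := by
  classical
  apply lmask_lt
  intro j hj
  simp only [List.mem_map, List.mem_filter] at hj
  obtain ⟨a, _, rfl⟩ := hj
  exact a.isLt

theorem testBit_maskP {w : ℕ} (p : Fin w → Prop) (j : Fin w) :
    (maskP p).testBit j = true ↔ p j := by
  classical
  rw [maskP, testBit_lmask]
  simp only [List.mem_map, List.mem_filter, List.mem_finRange, true_and]
  constructor
  · rintro ⟨a, ha, hv⟩
    have := Fin.val_injective hv
    subst this
    exact of_decide_eq_true ha
  · intro hp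
    exact ⟨j, by simpa using hp, rfl⟩

theorem mem_dec {n : ℕ} {e : E3} :
    e ∈ dec n ↔ ∃ j : Fin 12, n.testBit j = true ∧ eE j = e := by
  simp [dec, Finset.mem_image, Finset.mem_filter]

theorem pm_eq (M : Set E3) (h : IsPM (cube 3) M) : ∃ i : Fin 9, M = ↑(mf i) := by
  classical
  obtain ⟨hsub, huniq⟩ := h
  set n := maskP (fun j : Fin 12 => eE j ∈ M) with hn
  have hbit : ∀ j : Fin 12, (n.testBit j = true ↔ eE j ∈ M) := fun j => testBit_maskP _ j
  have hlt : n < 4096 := maskP_lt _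
  have hMe : ∀ e ∈ M, ∃ j : Fin 12, eE j = e := by
    intro e he
    have h1 : e ∈ edges3 := SimpleGraph.mem_edgeFinset.2 (hsub he)
    rw [d1] at h1
    simpa [Finset.mem_image] using h1
  have hpm : pmMask n = true := by
    rw [pmMask, List.all_eq_true]
    intro v hv
    rw [List.mem_range] at hv
    obtain ⟨e, ⟨heM, hev⟩, hu⟩ := huniq (eV ⟨v, hv⟩)
    obtain ⟨j₀, rfl⟩ := hMe e heM
    have hx : n &&& inc v = 2^(j₀ : ℕ) := by
      apply Nat.eq_of_testBit_eq
      intro k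
      rcases Nat.lt_or_ge k 12 with hk | hk
      · rw [Nat.testBit_and, Nat.testBit_two_pow]
        by_cases hkj : (j₀ : ℕ) = k
        · subst hkj
          rw [(hbit j₀).2 heM, (d3 ⟨v, hv⟩ j₀).2 hev]
          simp
        · have hne : ¬(n.testBit k = true ∧ (inc v).testBit k = true) := by
            rintro ⟨h1, h2⟩
            have hkM : eE ⟨k, hk⟩ ∈ M := (hbit ⟨k, hk⟩).1 h1
            have hkv : eV ⟨v, hv⟩ ∈ eE ⟨k, hk⟩ := (d3 ⟨v, hv⟩ ⟨k, hk⟩).1 h2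
            have heq := hu (eE ⟨k, hk⟩) ⟨hkM, hkv⟩
            exact hkj (congrArg Fin.val (d2 heq)).symm
          cases h1 : n.testBit k <;> cases h2 : (inc v).testBit k <;> simp_all
      · have h1 : n.testBit k = false :=
          Nat.testBit_lt_two_pow (lt_of_lt_of_le hlt (Nat.pow_le_pow_right (by norm_num : 0 < 2) hk))
        rw [Nat.testBit_and, h1, Bool.false_and, Nat.testBit_two_pow]
        have : (j₀ : ℕ) ≠ k := by have := j₀.isLt; omega
        simp [this]
    show ((n &&& inc v) != 0 && ((n &&& inc v) &&& ((n &&& inc v) - 1)) == 0) = true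
    rw [hx]
    have h2 : (2:ℕ)^(j₀:ℕ) &&& (2^(j₀:ℕ) - 1) = 0 := by
      apply Nat.eq_of_testBit_eq
      intro k
      rw [Nat.testBit_and, Nat.testBit_two_pow, Nat.testBit_two_pow_sub_one, Nat.zero_testBit]
      by_cases h : (j₀:ℕ) = k
      · subst h; simp
      · simp [h]
    rw [h2]
    simp [(Nat.two_pow_pos ((j₀ : ℕ))).ne']
  have hmem : n ∈ ([15,60,195,240,778,1440,2640,3077,3840] : List ℕ) := by
    have h1 : n ∈ (List.range 4096).filter pmMask :=
      List.mem_filter.2 ⟨List.mem_range.2 hlt, hpm⟩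
    rwa [N1] at h1
  have hex : ∃ i : Fin 9, n = Mk i := by
    simp only [List.mem_cons, List.not_mem_nil, or_false] at hmem
    rcases hmem with h|h|h|h|h|h|h|h|h
    exacts [⟨0, h⟩, ⟨1, h⟩, ⟨2, h⟩, ⟨3, h⟩, ⟨4, h⟩, ⟨5, h⟩, ⟨6, h⟩, ⟨7, h⟩, ⟨8, h⟩]
  obtain ⟨i, hi⟩ := hex
  refine ⟨i, ?_⟩
  ext e
  rw [Finset.mem_coe]
  constructor
  · intro he
    obtain ⟨j, rfl⟩ := hMe e he
    exact mem_dec.2 ⟨j, by rw [← hi]; exact (hbit j).2 he, rfl⟩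
  · intro he
    obtain ⟨j, hjb, rfl⟩ := mem_dec.1 he
    exact (hbit j).1 (by rw [hi]; exact hjb)

def FA : Set (Set E3) := {↑(mf 0), ↑(mf 5), ↑(mf 6)}
def FB : Set (Set E3) := {↑(mf 3), ↑(mf 4), ↑(mf 7)}
def FC : Set (Set E3) := {↑(mf 1), ↑(mf 2), ↑(mf 8)}
def FD : Set (Set E3) := {↑(mf 0), ↑(mf 3), ↑(mf 8)}

theorem setOf_mask (s : ℕ) (a b c : Fin 9)
    (hs : ∀ i : Fin 9, (s.testBit i = true ↔ i = a ∨ i = b ∨ i = c)) :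
    {M : Set E3 | ∃ i : Fin 9, s.testBit i = true ∧ M = ↑(mf i)} =
      {↑(mf a), ↑(mf b), ↑(mf c)} := by
  ext M
  simp only [Set.mem_setOf_eq, Set.mem_insert_iff, Set.mem_singleton_iff]
  constructor
  · rintro ⟨i, hb, rfl⟩
    rcases (hs i).1 hb with rfl | rfl | rfl
    exacts [Or.inl rfl, Or.inr (Or.inl rfl), Or.inr (Or.inr rfl)]
  · rintro (rfl | rfl | rfl)
    exacts [⟨a, (hs a).2 (Or.inl rfl), rfl⟩, ⟨b, (hs b).2 (Or.inr (Or.inl rfl)), rfl⟩,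
      ⟨c, (hs c).2 (Or.inr (Or.inr rfl)), rfl⟩]

theorem uf_eq (F : Set (Set E3)) (h : IsUnorderedFactorization (cube 3) F) :
    F = FA ∨ F = FB ∨ F = FC ∨ F = FD := by
  classical
  obtain ⟨hpmF, hdis, hcov⟩ := h
  have hmem : ∀ M ∈ F, ∃ i : Fin 9, M = ↑(mf i) := fun M hM => pm_eq M (hpmF M hM)
  set s := maskP (fun i : Fin 9 => (↑(mf i) : Set E3) ∈ F) with hsdef
  have hbit : ∀ i : Fin 9, (s.testBit i = true ↔ (↑(mf i) : Set E3) ∈ F) :=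
    fun i => testBit_maskP _ i
  have hlt : s < 512 := maskP_lt _
  have hdj : disjB s = true := by
    rw [disjB, List.all_eq_true]
    intro i hi; rw [List.mem_range] at hi
    rw [List.all_eq_true]
    intro j hj; rw [List.mem_range] at hj
    rw [Bool.or_eq_true]
    by_cases hc : s.testBit i = true ∧ s.testBit j = true ∧ i ≠ j
    · right
      obtain ⟨h1, h2, h3⟩ := hc
      have hMi := (hbit ⟨i, hi⟩).1 h1
      have hMj := (hbit ⟨j, hj⟩).1 h2
      have hne : (⟨i, hi⟩ : Fin 9) ≠ ⟨j, hj⟩ := fun hh => h3 (congrArg Fin.val hh)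
      have hdisj : Disjoint (↑(mf ⟨i, hi⟩) : Set E3) ↑(mf ⟨j, hj⟩) :=
        hdis _ hMi _ hMj (fun hh => d6 _ _ hne (Finset.coe_injective hh))
      have hz := (d5 ⟨i, hi⟩ ⟨j, hj⟩).2 (Finset.disjoint_coe.1 hdisj)
      simp [hz]
    · left
      have hfalse : (s.testBit i && s.testBit j && (i != j)) = false := by
        by_contra hcon
        rw [Bool.not_eq_false] at hcon
        simp only [Bool.and_eq_true, bne_iff_ne] at hcon
        exact hc ⟨hcon.1.1, hcon.1.2, hcon.2⟩
      rw [hfalse]; rfl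
  have hcv : covB s = true := by
    rw [covB, List.all_eq_true]
    intro j hj; rw [List.mem_range] at hj
    rw [List.any_eq_true]
    have hedge : eE ⟨j, hj⟩ ∈ edges3 := by
      rw [d1]; exact Finset.mem_image_of_mem _ (Finset.mem_univ _)
    have hes : (eE ⟨j, hj⟩ : E3) ∈ (cube 3).edgeSet := SimpleGraph.mem_edgeFinset.1 hedge
    rw [← hcov] at hes
    obtain ⟨M, hMF, heM⟩ := hes
    obtain ⟨i, rfl⟩ := hmem M hMF
    refine ⟨(i : ℕ), List.mem_range.2 i.isLt, ?_⟩
    rw [Bool.and_eq_true]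
    exact ⟨(hbit i).2 hMF, (d4 i ⟨j, hj⟩).2 (Finset.mem_coe.1 heM)⟩
  have hsmem : s ∈ ([97, 152, 262, 265] : List ℕ) := by
    have hN := N2
    rw [List.all_eq_true] at hN
    have h1 := hN s (List.mem_range.2 hlt)
    simpa [hdj, hcv] using h1
  have hFs : F = {M | ∃ i : Fin 9, s.testBit i = true ∧ M = ↑(mf i)} := by
    ext M
    constructor
    · intro hM
      obtain ⟨i, rfl⟩ := hmem M hM
      exact ⟨i, (hbit i).2 hM, rfl⟩
    · rintro ⟨i, hb, rfl⟩
      exact (hbit i).1 hb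
  simp only [List.mem_cons, List.not_mem_nil, or_false] at hsmem
  rcases hsmem with h | h | h | h <;> rw [h] at hFs
  · exact Or.inl (hFs.trans (setOf_mask 97 0 5 6 (by decide)))
  · exact Or.inr (Or.inl (hFs.trans (setOf_mask 152 3 4 7 (by decide))))
  · exact Or.inr (Or.inr (Or.inl (hFs.trans (setOf_mask 262 1 2 8 (by decide)))))
  · exact Or.inr (Or.inr (Or.inr (hFs.trans (setOf_mask 265 0 3 8 (by decide)))))

theorem pm_sound (i : Fin 9) : IsPM (cube 3) ↑(mf i) := by
  constructor
  · intro e he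
    exact SimpleGraph.mem_edgeFinset.1 (d7 i (Finset.mem_coe.1 he))
  · intro v
    obtain ⟨e, he, hv, hu⟩ := d8 i v
    exact ⟨e, ⟨Finset.mem_coe.2 he, hv⟩, fun e' ⟨he', hv'⟩ => hu e' (Finset.mem_coe.1 he') hv'⟩

theorem isUF_triple (a b c : Fin 9)
    (hcov : ∀ e : E3, e ∈ edges3 ↔ (e ∈ mf a ∨ e ∈ mf b ∨ e ∈ mf c))
    (hdab : Disjoint (mf a) (mf b)) (hdac : Disjoint (mf a) (mf c))
    (hdbc : Disjoint (mf b) (mf c)) :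
    IsUnorderedFactorization (cube 3) {↑(mf a), ↑(mf b), ↑(mf c)} := by
  refine ⟨?_, ?_, ?_⟩
  · intro M hM
    simp only [Set.mem_insert_iff, Set.mem_singleton_iff] at hM
    rcases hM with rfl | rfl | rfl <;> exact pm_sound _
  · intro M hM N hN hne
    simp only [Set.mem_insert_iff, Set.mem_singleton_iff] at hM hN
    rcases hM with rfl | rfl | rfl <;> rcases hN with rfl | rfl | rfl <;>
      first
        | exact absurd rfl hne
        | (rw [Finset.disjoint_coe]
           first
             | exact hdab | exact hdac | exact hdbc
             | exact hdab.symm | exact hdac.symm | exact hdbc.symm)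
  · ext e
    rw [Set.mem_sUnion]
    constructor
    · rintro ⟨M, hM, he⟩
      simp only [Set.mem_insert_iff, Set.mem_singleton_iff] at hM
      rcases hM with rfl | rfl | rfl <;>
        exact SimpleGraph.mem_edgeFinset.1 (d7 _ (Finset.mem_coe.1 he))
    · intro he
      have h1 : e ∈ edges3 := SimpleGraph.mem_edgeFinset.2 he
      rcases (hcov e).1 h1 with h | h | h
      exacts [⟨_, Or.inl rfl, h⟩, ⟨_, Or.inr (Or.inl rfl), h⟩, ⟨_, Or.inr (Or.inr rfl), h⟩]

theorem ufA : IsUnorderedFactorization (cube 3) FA :=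
  isUF_triple 0 5 6 d11a (by decide) (by decide) (by decide)
theorem ufB : IsUnorderedFactorization (cube 3) FB :=
  isUF_triple 3 4 7 d11b (by decide) (by decide) (by decide)
theorem ufC : IsUnorderedFactorization (cube 3) FC :=
  isUF_triple 1 2 8 d11c (by decide) (by decide) (by decide)
theorem ufD : IsUnorderedFactorization (cube 3) FD :=
  isUF_triple 0 3 8 d11d (by decide) (by decide) (by decide)

theorem hdm0 : dirMatching 3 0 = ↑(mf 0) :=
  Set.ext fun e => by simpa [dirMatching] using d10a e
theorem hdm1 : dirMatching 3 1 = ↑(mf 3) :=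
  Set.ext fun e => by simpa [dirMatching] using d10b e
theorem hdm2 : dirMatching 3 2 = ↑(mf 8) :=
  Set.ext fun e => by simpa [dirMatching] using d10c e

theorem hrange : Set.range (dirMatching 3) = FD := by
  ext N
  simp only [Set.mem_range, FD, Set.mem_insert_iff, Set.mem_singleton_iff]
  constructor
  · rintro ⟨i, rfl⟩
    fin_cases i
    exacts [Or.inl hdm0, Or.inr (Or.inl hdm1), Or.inr (Or.inr hdm2)]
  · rintro (rfl | rfl | rfl)
    exacts [⟨0, hdm0⟩, ⟨1, hdm1⟩, ⟨2, hdm2⟩]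

theorem coe_mf_inj {i j : Fin 9} (h : (↑(mf i) : Set E3) = ↑(mf j)) : i = j := by
  by_contra hne; exact d6 i j hne (Finset.coe_injective h)

theorem not_mem_triple {i a b c : Fin 9} (h1 : i ≠ a) (h2 : i ≠ b) (h3 : i ≠ c) :
    (↑(mf i) : Set E3) ∉ ({↑(mf a), ↑(mf b), ↑(mf c)} : Set (Set E3)) := by
  intro h
  simp only [Set.mem_insert_iff, Set.mem_singleton_iff] at h
  rcases h with h | h | h
  exacts [h1 (coe_mf_inj h), h2 (coe_mf_inj h), h3 (coe_mf_inj h)]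

theorem mf5_mem_FA : (↑(mf 5) : Set E3) ∈ FA := Or.inr (Or.inl rfl)
theorem mf4_mem_FB : (↑(mf 4) : Set E3) ∈ FB := Or.inr (Or.inl rfl)
theorem mf1_mem_FC : (↑(mf 1) : Set E3) ∈ FC := Or.inl rfl

theorem FA_ne_FB : FA ≠ FB := fun h =>
  not_mem_triple (by decide) (by decide) (by decide) (h ▸ mf5_mem_FA)
theorem FA_ne_FC : FA ≠ FC := fun h =>
  not_mem_triple (by decide) (by decide) (by decide) (h ▸ mf5_mem_FA)
theorem FA_ne_FD : FA ≠ FD := fun h =>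
  not_mem_triple (by decide) (by decide) (by decide) (h ▸ mf5_mem_FA)
theorem FB_ne_FC : FB ≠ FC := fun h =>
  not_mem_triple (by decide) (by decide) (by decide) (h ▸ mf4_mem_FB)
theorem FB_ne_FD : FB ≠ FD := fun h =>
  not_mem_triple (by decide) (by decide) (by decide) (h ▸ mf4_mem_FB)
theorem FC_ne_FD : FC ≠ FD := fun h =>
  not_mem_triple (by decide) (by decide) (by decide) (h ▸ mf1_mem_FC)

theorem final_card : ({FA, FB, FC, FD} : Set (Set (Set E3))).ncard = 4 := by
  have h1 : FA ∉ ({FB, FC, FD} : Set (Set (Set E3))) := by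
    rintro (h | h | h)
    exacts [FA_ne_FB h, FA_ne_FC h, FA_ne_FD h]
  have h2 : FB ∉ ({FC, FD} : Set (Set (Set E3))) := by
    rintro (h | h)
    exacts [FB_ne_FC h, FB_ne_FD h]
  have h3 : FC ∉ ({FD} : Set (Set (Set E3))) := fun h => FC_ne_FD h
  rw [Set.ncard_insert_of_notMem h1 (Set.toFinite _),
    Set.ncard_insert_of_notMem h2 (Set.toFinite _),
    Set.ncard_insert_of_notMem h3 (Set.toFinite _), Set.ncard_singleton]

theorem selA : {N ∈ FA | ∃ i, N = dirMatching 3 i} = {(↑(mf 0) : Set E3)} := by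
  ext N
  simp only [Set.mem_sep_iff, FA, Set.mem_insert_iff, Set.mem_singleton_iff]
  constructor
  · rintro ⟨hN, i, rfl⟩
    fin_cases i
    · exact hdm0
    · rcases hN with h | h | h <;>
        exact absurd (coe_mf_inj (hdm1.symm.trans h)) (by decide)
    · rcases hN with h | h | h <;>
        exact absurd (coe_mf_inj (hdm2.symm.trans h)) (by decide)
  · rintro rfl
    exact ⟨Or.inl rfl, 0, hdm0.symm⟩

theorem selB : {N ∈ FB | ∃ i, N = dirMatching 3 i} = {(↑(mf 3) : Set E3)} := by
  ext N
  simp only [Set.mem_sep_iff, FB, Set.mem_insert_iff, Set.mem_singleton_iff]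
  constructor
  · rintro ⟨hN, i, rfl⟩
    fin_cases i
    · rcases hN with h | h | h <;>
        exact absurd (coe_mf_inj (hdm0.symm.trans h)) (by decide)
    · exact hdm1
    · rcases hN with h | h | h <;>
        exact absurd (coe_mf_inj (hdm2.symm.trans h)) (by decide)
  · rintro rfl
    exact ⟨Or.inl rfl, 1, hdm1.symm⟩

theorem selC : {N ∈ FC | ∃ i, N = dirMatching 3 i} = {(↑(mf 8) : Set E3)} := by
  ext N
  simp only [Set.mem_sep_iff, FC, Set.mem_insert_iff, Set.mem_singleton_iff]
  constructor
  · rintro ⟨hN, i, rfl⟩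
    fin_cases i
    · rcases hN with h | h | h <;>
        exact absurd (coe_mf_inj (hdm0.symm.trans h)) (by decide)
    · rcases hN with h | h | h <;>
        exact absurd (coe_mf_inj (hdm1.symm.trans h)) (by decide)
    · exact hdm2
  · rintro rfl
    exact ⟨Or.inr (Or.inr rfl), 2, hdm2.symm⟩

end S17

/-- `Q₃` has exactly four 1-factorizations (as unordered collections of matchings):
one of them is the set of the three directional matchings, and each of the other three
contains exactly one directional matching. -/
theorem statement17 :
    {F : Set (Set (Sym2 (Finset (Fin 3)))) | IsUnorderedFactorization (cube 3) F}.ncard = 4 ∧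
    IsUnorderedFactorization (cube 3) (Set.range (dirMatching 3)) ∧
    ∀ F : Set (Set (Sym2 (Finset (Fin 3)))),
      IsUnorderedFactorization (cube 3) F → F ≠ Set.range (dirMatching 3) →
        {N ∈ F | ∃ i, N = dirMatching 3 i}.ncard = 1 := by
  refine ⟨?_, ?_, ?_⟩
  · have hset : {F : Set (Set (Sym2 (Finset (Fin 3)))) | IsUnorderedFactorization (cube 3) F}
        = {S17.FA, S17.FB, S17.FC, S17.FD} := by
      ext F
      simp only [Set.mem_setOf_eq, Set.mem_insert_iff, Set.mem_singleton_iff]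
      constructor
      · exact fun h => S17.uf_eq F h
      · rintro (rfl | rfl | rfl | rfl)
        exacts [S17.ufA, S17.ufB, S17.ufC, S17.ufD]
    rw [hset]
    exact S17.final_card
  · rw [S17.hrange]
    exact S17.ufD
  · intro F hF hne
    rcases S17.uf_eq F hF with rfl | rfl | rfl | rfl
    · rw [S17.selA]; exact Set.ncard_singleton _
    · rw [S17.selB]; exact Set.ncard_singleton _
    · rw [S17.selC]; exact Set.ncard_singleton _
    · exact absurd S17.hrange.symm hne
end
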